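/- arXiv:1103.1057 — 5 statements merged into one kernel-verified Lean document; each statement's English description precedes it below -/
import Mathlib

section
/- Let H = (V, E) be a hypergraph with Bip H connected. For any non-empty subset E' ⊆ E of hyperedges there exists a hypertree f with Σ_{e∈E'} f(e) = |∪E'| − c(E'). Moreover, if a hypertree f and a non-empty E' ⊆ E satisfy Σ_{e∈E'} f(e) < |∪E'| − c(E'), then f is such that a transfer of valence is possible from some element of E ∖ E' to some element of E'. -/
open SimpleGraph Finset
open scoped Classical

noncomputable section

variable {α β : Type} [DecidableEq α] [DecidableEq β]

/-- A hypergraph: a finite set `V` of vertices, a finite (index) set `E` of hyperedges,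
where the hyperedge indexed by `e ∈ E` is the nonempty set `incid e ⊆ V` of its vertices.
(Indexing hyperedges by a type allows multiset multiplicities, as in the paper.) -/
structure Hypergraph' (α β : Type) where
  V : Finset α
  E : Finset β
  incid : β → Finset α
  incid_sub : ∀ e ∈ E, incid e ⊆ V
  incid_nonempty : ∀ e ∈ E, (incid e).Nonempty

/-- The degree (valence) of a vertex in a graph. -/
def degr {W : Type} (T : SimpleGraph W) (x : W) : ℕ := (T.neighborSet x).ncard

/-- Nullity (first Betti number) of a graph: #edges − #vertices + #components. -/
def nullity {W : Type} (G : SimpleGraph W) : ℕ :=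
  G.edgeSet.ncard + Nat.card G.ConnectedComponent - Nat.card W

/-- The result of transferring one unit of valence from `a` to `b`. -/
def transferFun (f : β → ℕ) (a b : β) : β → ℕ :=
  fun x => if x = a then f a - 1 else if x = b then f b + 1 else f x

namespace Hypergraph'

variable (H : Hypergraph' α β)

/-- The bipartite graph associated to a hypergraph: color classes `V` and `E`,
with `v` joined to `e` iff `v ∈ incid e`. -/
def Bip : SimpleGraph (↥H.V ⊕ ↥H.E) :=
  SimpleGraph.fromRel (fun x y =>
    ∃ (v : ↥H.V) (e : ↥H.E), x = Sum.inl v ∧ y = Sum.inr e ∧ (v : α) ∈ H.incid (e : β))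

/-- A spanning tree of the associated bipartite graph. -/
def IsSpanningTree (T : SimpleGraph (↥H.V ⊕ ↥H.E)) : Prop :=
  T ≤ H.Bip ∧ T.IsTree

/-- `T` is a spanning tree of `Bip H` realizing the vector `f` (a function on the
hyperedges, encoded as a function on `β` vanishing off `E`): `T` has degree
`f e + 1` at each hyperedge `e`. -/
def Realizes (T : SimpleGraph (↥H.V ⊕ ↥H.E)) (f : β → ℕ) : Prop :=
  H.IsSpanningTree T ∧ (∀ e, e ∉ H.E → f e = 0) ∧
    ∀ e : ↥H.E, degr T (Sum.inr e) = f (e : β) + 1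

/-- A hypertree is a vector realized by some spanning tree of `Bip H`. -/
def IsHypertree (f : β → ℕ) : Prop := ∃ T, H.Realizes T f

/-- The bipartite graph `Bip H |_{E'}` induced by a subset `E'` of hyperedges:
color classes `∪E'` and `E'`. -/
def BipOn (E' : Finset β) : SimpleGraph (↥(E'.biUnion H.incid) ⊕ ↥E') :=
  SimpleGraph.fromRel (fun x y =>
    ∃ (v : ↥(E'.biUnion H.incid)) (e : ↥E'),
      x = Sum.inl v ∧ y = Sum.inr e ∧ (v : α) ∈ H.incid (e : β))

/-- `c(E')`: the number of connected components of `Bip H |_{E'}`. -/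
def compCount (E' : Finset β) : ℕ := Nat.card (H.BipOn E').ConnectedComponent

/-- `μ(E') = |∪E'| − c(E')` (and `μ(∅) = 0`). -/
def mu (E' : Finset β) : ℤ :=
  ((E'.biUnion H.incid).card : ℤ) - (H.compCount E' : ℤ)

/-- `f` is such that a transfer of valence is possible from `a` to `b`. -/
def TransferPossible (f : β → ℕ) (a b : β) : Prop :=
  0 < f a ∧ H.IsHypertree (transferFun f a b)

/-- `e` is internally active w.r.t. the hypertree `f` and the order `o`. -/
def InternallyActive (o : LinearOrder β) (f : β → ℕ) (e : β) : Prop :=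
  ∀ x ∈ H.E, o.lt x e → ¬ H.TransferPossible f e x

/-- `e` is externally active w.r.t. the hypertree `f` and the order `o`. -/
def ExternallyActive (o : LinearOrder β) (f : β → ℕ) (e : β) : Prop :=
  ∀ x ∈ H.E, o.lt x e → ¬ H.TransferPossible f x e

/-- `ῑ(f)`: the number of internally inactive hyperedges w.r.t. `f`. -/
def intInact (o : LinearOrder β) (f : β → ℕ) : ℕ :=
  (H.E.filter (fun e => ¬ H.InternallyActive o f e)).card

/-- `ε̄(f)`: the number of externally inactive hyperedges w.r.t. `f`. -/
def extInact (o : LinearOrder β) (f : β → ℕ) : ℕ :=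
  (H.E.filter (fun e => ¬ H.ExternallyActive o f e)).card

end Hypergraph'


namespace HypAux


variable {W : Type} [Fintype W]
set_option linter.unusedSectionVars false
set_option maxHeartbeats 1000000





/-- Reachability is monotone under "every edge has reachable endpoints". -/
lemma reach_mono {G K : SimpleGraph W} (h : ∀ a b, G.Adj a b → K.Reachable a b)
    {x y : W} (hr : G.Reachable x y) : K.Reachable x y := by
  obtain ⟨p⟩ := hr
  induction p with
  | nil => exact Reachable.refl _
  | cons ha _ ih => exact (h _ _ ha).trans ih

lemma reach_sup_edge {A : SimpleGraph W} {u v x y : W}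
    (h : (A ⊔ edge u v).Reachable x y) :
    A.Reachable x y ∨ (A.Reachable x u ∧ A.Reachable v y) ∨
      (A.Reachable x v ∧ A.Reachable u y) := by
  obtain ⟨p⟩ := h
  induction p with
  | nil => exact Or.inl (Reachable.refl _)
  | @cons a b c ha _ ih =>
    rcases ha with hA | hE
    · rcases ih with h1 | ⟨h1, h2⟩ | ⟨h1, h2⟩
      · exact Or.inl (hA.reachable.trans h1)
      · exact Or.inr (Or.inl ⟨hA.reachable.trans h1, h2⟩)
      · exact Or.inr (Or.inr ⟨hA.reachable.trans h1, h2⟩)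
    · rw [edge_adj] at hE
      rcases hE.1 with ⟨rfl, rfl⟩ | ⟨rfl, rfl⟩
      · rcases ih with h1 | ⟨h1, h2⟩ | ⟨h1, h2⟩
        · exact Or.inr (Or.inl ⟨Reachable.refl _, h1⟩)
        · exact Or.inl (h1.symm.trans h2)
        · exact Or.inl h2
      · rcases ih with h1 | ⟨h1, h2⟩ | ⟨h1, h2⟩
        · exact Or.inr (Or.inr ⟨Reachable.refl _, h1⟩)
        · exact Or.inl h2
        · exact Or.inl (h1.symm.trans h2)

lemma acyclic_sup_edge {A : SimpleGraph W} {u v : W} (hA : A.IsAcyclic)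
    (hr : ¬ A.Reachable u v) : (A ⊔ edge u v).IsAcyclic := by
  intro w c hc
  by_cases he : s(u, v) ∈ c.edges
  · have h2 : (A ⊔ edge u v).Adj u v ∧
        ((A ⊔ edge u v) \ fromEdgeSet {s(u, v)}).Reachable u v :=
      (adj_and_reachable_delete_edges_iff_exists_cycle).2 ⟨w, c, hc, he⟩
    have hle : ((A ⊔ edge u v) \ fromEdgeSet {s(u, v)}) ≤ A := by
      intro a b hab
      obtain ⟨hab1, hab2⟩ := hab
      rcases hab1 with h | h
      · exact h
      · rw [edge_adj] at h
        exfalso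
        apply hab2
        rw [fromEdgeSet_adj]
        refine ⟨?_, h.2⟩
        rcases h.1 with ⟨rfl, rfl⟩ | ⟨rfl, rfl⟩
        · exact rfl
        · exact Sym2.eq_swap
    exact hr (h2.2.mono hle)
  · have hsub : ∀ e ∈ c.edges, e ∈ A.edgeSet := by
      intro e hee
      have := c.edges_subset_edgeSet hee
      rw [edgeSet_sup] at this
      rcases this with h | h
      · exact h
      · exfalso
        by_cases huv : u = v
        · subst huv
          rw [edge_self_eq_bot] at h
          simp at h
        · rw [edge_edgeSet_of_ne huv] at h
          rw [Set.mem_singleton_iff] at h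
          exact he (h ▸ hee)
    exact hA (c.transfer A hsub) (hc.transfer hsub)




lemma cc_card_bot : Nat.card (⊥ : SimpleGraph W).ConnectedComponent = Fintype.card W := by
  have : Function.Bijective ((⊥ : SimpleGraph W).connectedComponentMk) := by
    constructor
    · intro a b h
      exact reachable_bot.mp (ConnectedComponent.exact h)
    · intro c
      exact c.exists_rep
  rw [← Nat.card_eq_fintype_card]
  exact (Nat.card_congr (Equiv.ofBijective _ this)).symm

lemma cc_reach_lift {G K : SimpleGraph W} (h : ∀ a b, G.Reachable a b → K.Reachable a b) :
    ∀ c : G.ConnectedComponent, ∃ w, ConnectedComponent.lift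
      (fun w => K.connectedComponentMk w)
      (fun a b p _ => ConnectedComponent.sound (h a b ⟨p⟩)) c = K.connectedComponentMk w := by
  intro c
  obtain ⟨w, rfl⟩ := c.exists_rep
  exact ⟨w, rfl⟩

/-- Equal reachability relations give equinumerous component sets. -/
lemma cc_card_eq_of_reach {G K : SimpleGraph W}
    (h : ∀ a b, G.Reachable a b ↔ K.Reachable a b) :
    Nat.card G.ConnectedComponent = Nat.card K.ConnectedComponent := by
  apply Nat.card_congr
  refine ⟨ConnectedComponent.lift (fun w => K.connectedComponentMk w)
      (fun a b p _ => ConnectedComponent.sound ((h a b).1 ⟨p⟩)),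
    ConnectedComponent.lift (fun w => G.connectedComponentMk w)
      (fun a b p _ => ConnectedComponent.sound ((h a b).2 ⟨p⟩)), ?_, ?_⟩
  · intro c
    obtain ⟨w, rfl⟩ := c.exists_rep
    rfl
  · intro c
    obtain ⟨w, rfl⟩ := c.exists_rep
    rfl

lemma cc_card_sup_edge {A : SimpleGraph W} {u v : W} (hr : ¬ A.Reachable u v) :
    Nat.card (A ⊔ edge u v).ConnectedComponent + 1 = Nat.card A.ConnectedComponent := by
  set B := A ⊔ edge u v with hB
  have hne : u ≠ v := by rintro rfl; exact hr (Reachable.refl u)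
  have hBuv : B.Adj u v := Or.inr (by rw [edge_adj]; exact ⟨Or.inl ⟨rfl, rfl⟩, hne⟩)
  set cv := A.connectedComponentMk v with hcv
  set g : W → A.ConnectedComponent :=
    fun w => if A.Reachable v w then A.connectedComponentMk u else A.connectedComponentMk w
    with hg
  have hgadj : ∀ a b, B.Adj a b → g a = g b := by
    intro a b hab
    rcases hab with hA | hE
    · by_cases hva : A.Reachable v a
      · simp only [hg, if_pos hva, if_pos (hva.trans hA.reachable)]
      · have hvb : ¬ A.Reachable v b := fun hvb => hva (hvb.trans hA.symm.reachable)
        simp only [hg, if_neg hva, if_neg hvb]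
        exact ConnectedComponent.sound hA.reachable
    · rw [edge_adj] at hE
      rcases hE.1 with ⟨rfl, rfl⟩ | ⟨rfl, rfl⟩ <;>
      · simp only [hg]
        rw [if_pos (Reachable.refl _)]
        split <;> rfl
  have hgne : ∀ w, g w ≠ cv := by
    intro w hw
    by_cases hvw : A.Reachable v w
    · simp only [hg, if_pos hvw] at hw
      exact hr (ConnectedComponent.exact hw)
    · simp only [hg, if_neg hvw] at hw
      exact hvw (ConnectedComponent.exact hw).symm
  have hgconst : ∀ a b, B.Reachable a b → g a = g b := by
    intro a b hab
    obtain ⟨p⟩ := hab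
    induction p with
    | nil => rfl
    | cons ha _ ih => exact (hgadj _ _ ha).trans ih
  set ψ : B.ConnectedComponent → {c : A.ConnectedComponent // c ≠ cv} :=
    fun c => ⟨ConnectedComponent.lift g (fun a b p _ => hgconst a b ⟨p⟩) c, by
      obtain ⟨w, rfl⟩ := c.exists_rep
      exact hgne w⟩ with hψ
  have hbij : Function.Bijective ψ := by
    constructor
    · intro c1 c2 hc
      obtain ⟨a, rfl⟩ := c1.exists_rep
      obtain ⟨b, rfl⟩ := c2.exists_rep
      have hgab : g a = g b := congrArg Subtype.val hc
      apply ConnectedComponent.sound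
      by_cases hva : A.Reachable v a <;> by_cases hvb : A.Reachable v b
      · exact ((hva.symm.trans hvb).mono (le_sup_left : A ≤ B))
      · simp only [hg, if_pos hva, if_neg hvb] at hgab
        have hub : A.Reachable u b := ConnectedComponent.exact hgab
        exact ((hva.symm.mono (le_sup_left : A ≤ B)).trans
          (hBuv.symm.reachable.trans (hub.mono (le_sup_left : A ≤ B))))
      · simp only [hg, if_neg hva, if_pos hvb] at hgab
        have hua : A.Reachable u a := ConnectedComponent.exact hgab.symm
        exact (((hua.symm.mono (le_sup_left : A ≤ B)).trans hBuv.reachable).trans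
          (hvb.mono (le_sup_left : A ≤ B)))
      · simp only [hg, if_neg hva, if_neg hvb] at hgab
        exact (ConnectedComponent.exact hgab).mono (le_sup_left : A ≤ B)
    · rintro ⟨c, hc⟩
      obtain ⟨w, rfl⟩ := c.exists_rep
      have hvw : ¬ A.Reachable v w := fun h => hc (ConnectedComponent.sound h).symm
      refine ⟨B.connectedComponentMk w, ?_⟩
      apply Subtype.ext
      show g w = _
      simp only [hg, if_neg hvw]
      rfl
  have h1 : Nat.card B.ConnectedComponent = Nat.card {c : A.ConnectedComponent // c ≠ cv} :=
    Nat.card_congr (Equiv.ofBijective _ hbij)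
  letI : Fintype A.ConnectedComponent := Fintype.ofFinite _
  have h2 : Nat.card {c : A.ConnectedComponent // c ≠ cv}
      = Fintype.card {c : A.ConnectedComponent // ¬ c = cv} := Nat.card_eq_fintype_card
  have h3 : Fintype.card {c : A.ConnectedComponent // ¬ c = cv}
      = Fintype.card A.ConnectedComponent - Fintype.card {c : A.ConnectedComponent // c = cv} :=
    Fintype.card_subtype_compl _
  have h4 : Fintype.card {c : A.ConnectedComponent // c = cv} = 1 := Fintype.card_subtype_eq _
  have h5 : 0 < Fintype.card A.ConnectedComponent := Fintype.card_pos_iff.mpr ⟨cv⟩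
  have h6 : Nat.card A.ConnectedComponent = Fintype.card A.ConnectedComponent :=
    Nat.card_eq_fintype_card
  omega


lemma isAcyclic_anti {A B : SimpleGraph W} (h : A ≤ B) (hB : B.IsAcyclic) : A.IsAcyclic :=
  fun _ c hc => hB (c.mapLe h) (hc.mapLe h)

lemma deleteEdge_sup_eq {A : SimpleGraph W} {u v : W} (huv : A.Adj u v) :
    A.deleteEdges {s(u, v)} ⊔ edge u v = A := by
  ext a b
  constructor
  · rintro (⟨h, -⟩ | h)
    · exact h
    · rw [edge_adj] at h
      rcases h.1 with ⟨rfl, rfl⟩ | ⟨rfl, rfl⟩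
      · exact huv
      · exact huv.symm
  · intro h
    by_cases he : s(a, b) = s(u, v)
    · right
      rw [edge_adj]
      rw [Sym2.eq_iff] at he
      exact ⟨he, h.ne⟩
    · left
      refine ⟨h, ?_⟩
      rw [fromEdgeSet_adj]
      rintro ⟨h1, -⟩
      exact he h1

lemma edgeSet_ncard_sup_edge {A : SimpleGraph W} {u v : W} (hnadj : ¬ A.Adj u v)
    (hne : u ≠ v) : (A ⊔ edge u v).edgeSet.ncard = A.edgeSet.ncard + 1 := by
  rw [edgeSet_sup, edge_edgeSet_of_ne hne, Set.union_singleton,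
    Set.ncard_insert_of_notMem (by rwa [mem_edgeSet]) (Set.toFinite _)]

lemma acyclic_card_edgeSet :
    ∀ (n : ℕ) (A : SimpleGraph W), A.edgeSet.ncard = n → A.IsAcyclic →
      n + Nat.card A.ConnectedComponent = Fintype.card W := by
  intro n
  induction n with
  | zero =>
    intro A hcard _
    have : A = ⊥ := by
      rw [← edgeSet_eq_empty]
      exact (Set.ncard_eq_zero (Set.toFinite _)).mp hcard
    subst this
    simpa using cc_card_bot (W := W)
  | succ m ih =>
    intro A hcard hA
    have hpos : 0 < A.edgeSet.ncard := by omega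
    obtain ⟨e, he⟩ := (Set.ncard_pos (Set.toFinite _)).mp hpos
    induction e using Sym2.ind with
    | _ u v =>
    have huv : A.Adj u v := by rwa [mem_edgeSet] at he
    have hle : A.deleteEdges {s(u, v)} ≤ A := deleteEdges_le _
    have hacyc' : (A.deleteEdges {s(u, v)}).IsAcyclic := isAcyclic_anti hle hA
    have hnr : ¬ (A.deleteEdges {s(u, v)}).Reachable u v :=
      ((isAcyclic_iff_forall_adj_isBridge.mp hA) huv)
    have hsup : A.deleteEdges {s(u, v)} ⊔ edge u v = A := deleteEdge_sup_eq huv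
    have hcard' : (A.deleteEdges {s(u, v)}).edgeSet.ncard = m := by
      rw [edgeSet_deleteEdges]
      have := Set.ncard_diff_singleton_add_one he (Set.toFinite _)
      omega
    have hih := ih _ hcard' hacyc'
    have hcc := cc_card_sup_edge hnr
    rw [hsup] at hcc
    omega

/-- Any acyclic subgraph of `G` extends to an acyclic subgraph spanning
the reachability relation of `G`. -/
lemma exists_max_forest :
    ∀ (k : ℕ) (G A : SimpleGraph W), G.edgeSet.ncard ≤ A.edgeSet.ncard + k →
      A ≤ G → A.IsAcyclic →
      ∃ B, A ≤ B ∧ B ≤ G ∧ B.IsAcyclic ∧ (∀ u v, G.Reachable u v → B.Reachable u v) := by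
  intro k
  induction k with
  | zero =>
    intro G A hk hle hacyc
    have : A = G := by
      rw [← edgeSet_inj]
      exact Set.eq_of_subset_of_ncard_le (edgeSet_mono hle) (by omega) (Set.toFinite _)
    subst this
    exact ⟨A, le_rfl, le_rfl, hacyc, fun _ _ h => h⟩
  | succ m ih =>
    intro G A hk hle hacyc
    by_cases hall : ∀ u v, G.Adj u v → A.Reachable u v
    · exact ⟨A, le_rfl, hle, hacyc, fun u v h => reach_mono hall h⟩
    · push_neg at hall
      obtain ⟨u, v, huv, hnr⟩ := hall
      have hnadj : ¬ A.Adj u v := fun h => hnr h.reachable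
      have hcard' : (A ⊔ edge u v).edgeSet.ncard = A.edgeSet.ncard + 1 :=
        edgeSet_ncard_sup_edge hnadj huv.ne
      have hle' : A ⊔ edge u v ≤ G := by
        apply sup_le hle
        intro a b hab
        rw [edge_adj] at hab
        rcases hab.1 with ⟨rfl, rfl⟩ | ⟨rfl, rfl⟩
        · exact huv
        · exact huv.symm
      have hacyc' : (A ⊔ edge u v).IsAcyclic := acyclic_sup_edge hacyc hnr
      have hcardle : (A ⊔ edge u v).edgeSet.ncard ≤ G.edgeSet.ncard := by
        apply Set.ncard_le_ncard (edgeSet_mono hle') (Set.toFinite _)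
      obtain ⟨B, h1, h2, h3, h4⟩ := ih G (A ⊔ edge u v) (by omega) hle' hacyc'
      exact ⟨B, le_trans le_sup_left h1, h2, h3, h4⟩




lemma degr_pos {T : SimpleGraph W} (hT : T.Connected) {x y : W} (hxy : x ≠ y) :
    0 < degr T x := by
  obtain ⟨p⟩ := hT x y
  cases p with
  | nil => exact absurd rfl hxy
  | cons h q =>
    rw [degr, Set.ncard_pos (Set.toFinite _)]
    exact ⟨_, h⟩

lemma degr_eq_filter (B : SimpleGraph W) (x : W) :
    degr B x = (univ.filter (fun y => B.Adj x y)).card := by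
  rw [degr, Set.ncard_eq_toFinset_card']
  congr 1
  ext y
  simp [neighborSet]
  exact Set.mem_toFinset

/-- Double counting: if every edge of `B` has exactly one endpoint in `S`,
the sum of degrees over `S` counts the edges. -/
lemma sum_degr_eq_card_edges {B : SimpleGraph W} {S : Finset W}
    (h : ∀ a b, B.Adj a b → (a ∈ S ↔ b ∉ S)) :
    ∑ x ∈ S, degr B x = B.edgeSet.ncard := by
  classical
  set P : Finset (W × W) := univ.filter (fun p : W × W => B.Adj p.1 p.2 ∧ p.1 ∈ S) with hP
  have h1 : P.card = ∑ x ∈ S, (P.filter (fun p => p.1 = x)).card :=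
    card_eq_sum_card_fiberwise (fun p hp => by
      exact (Finset.mem_filter.mp hp).2.2)
  have h2 : ∀ x ∈ S, (P.filter (fun p => p.1 = x)).card = degr B x := by
    intro x hx
    rw [degr_eq_filter]
    apply card_bij (fun p _ => p.2)
    · intro p hp
      simp only [hP, mem_filter, mem_univ, true_and] at hp ⊢
      obtain ⟨⟨hadj, -⟩, rfl⟩ := hp
      exact hadj
    · intro p hp q hq hpq
      simp only [hP, mem_filter] at hp hq
      exact Prod.ext (hp.2.trans hq.2.symm) hpq
    · intro y hy
      simp only [mem_filter, mem_univ, true_and] at hy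
      exact ⟨(x, y), by simp [hP, hy, hx], rfl⟩
  have h3 : P.card = B.edgeSet.ncard := by
    rw [Set.ncard_eq_toFinset_card']
    apply card_bij (fun p _ => s(p.1, p.2))
    · intro p hp
      simp only [hP, mem_filter, mem_univ, true_and] at hp
      simp only [Set.mem_toFinset, mem_edgeSet]
      exact hp.1
    · intro p hp q hq hpq
      simp only [hP, mem_filter, mem_univ, true_and] at hp hq
      rw [Sym2.eq_iff] at hpq
      rcases hpq with ⟨h1, h2⟩ | ⟨h1, h2⟩
      · exact Prod.ext h1 h2
      · exfalso
        have := (h _ _ hp.1).mp hp.2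
        rw [h2] at this
        exact this hq.2
    · intro e he
      simp only [Set.mem_toFinset] at he
      induction e using Sym2.ind with
      | _ a b =>
      rw [mem_edgeSet] at he
      by_cases ha : a ∈ S
      · exact ⟨(a, b), by simp [hP, he, ha], rfl⟩
      · have hb : b ∈ S := by
          by_contra hb
          exact ha ((h _ _ he).mpr hb)
        exact ⟨(b, a), by simp [hP, he.symm, hb], Sym2.eq_swap⟩
  rw [← h3, h1]
  exact (Finset.sum_congr rfl h2).symm

lemma cc_card_map {X : Type} [Fintype X] (ι : X ↪ W) (K : SimpleGraph X) :
    Nat.card (K.map ι).ConnectedComponent + Fintype.card X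
      = Nat.card K.ConnectedComponent + Fintype.card W := by
  classical
  set g : W → K.ConnectedComponent ⊕ {y : W // y ∉ Set.range ι} :=
    fun y => if h : ∃ x, ι x = y then Sum.inl (K.connectedComponentMk h.choose)
      else Sum.inr ⟨y, fun ⟨x, hx⟩ => h ⟨x, hx⟩⟩ with hgdef
  have hg : ∀ x : X, g (ι x) = Sum.inl (K.connectedComponentMk x) := by
    intro x
    have hex : ∃ x', ι x' = ι x := ⟨x, rfl⟩
    have : hex.choose = x := ι.injective hex.choose_spec
    simp only [hgdef, dif_pos hex, this]
  have hg' : ∀ y (hy : ¬ ∃ x, ι x = y), g y = Sum.inr ⟨y, fun ⟨x, hx⟩ => hy ⟨x, hx⟩⟩ := by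
    intro y hy
    simp only [hgdef, dif_neg hy]
  have hgadj : ∀ a b, (K.map ι).Adj a b → g a = g b := by
    rintro a b ⟨-, x, y, hxy, rfl, rfl⟩
    rw [hg, hg]
    exact congrArg _ (ConnectedComponent.sound hxy.reachable)
  have hgconst : ∀ a b, (K.map ι).Reachable a b → g a = g b := by
    intro a b hab
    obtain ⟨p⟩ := hab
    induction p with
    | nil => rfl
    | cons ha _ ih => exact (hgadj _ _ ha).trans ih
  have hmapreach : ∀ a b, K.Reachable a b → (K.map ι).Reachable (ι a) (ι b) := by
    intro a b hab
    obtain ⟨p⟩ := hab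
    induction p with
    | nil => exact Reachable.refl _
    | cons ha _ ih =>
      exact (Reachable.trans ⟨Walk.cons ⟨ι.injective.ne ha.ne, _, _, ha, rfl, rfl⟩ Walk.nil⟩ ih)
  set Φ : (K.map ι).ConnectedComponent → K.ConnectedComponent ⊕ {y : W // y ∉ Set.range ι} :=
    ConnectedComponent.lift g (fun a b p _ => hgconst a b ⟨p⟩) with hΦ
  set χ : K.ConnectedComponent ⊕ {y : W // y ∉ Set.range ι} → (K.map ι).ConnectedComponent :=
    Sum.elim (ConnectedComponent.lift (fun x => (K.map ι).connectedComponentMk (ι x))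
        (fun a b p _ => ConnectedComponent.sound (hmapreach a b ⟨p⟩)))
      (fun y => (K.map ι).connectedComponentMk y.1) with hχ
  have hΦχ : ∀ c, χ (Φ c) = c := by
    intro c
    obtain ⟨w, rfl⟩ := c.exists_rep
    by_cases hw : ∃ x, ι x = w
    · obtain ⟨x, rfl⟩ := hw
      show χ (g (ι x)) = _
      rw [hg]
      rfl
    · show χ (g w) = _
      rw [hg' w hw]
      rfl
  have hχΦ : ∀ d, Φ (χ d) = d := by
    rintro (c | ⟨y, hy⟩)
    · obtain ⟨x, rfl⟩ := c.exists_rep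
      show Φ ((K.map ι).connectedComponentMk (ι x)) = _
      show g (ι x) = _
      rw [hg]
      rfl
    · show g y = _
      rw [hg' y (fun ⟨x, hx⟩ => hy ⟨x, hx⟩)]
  have hcardeq : Nat.card (K.map ι).ConnectedComponent
      = Nat.card K.ConnectedComponent + Nat.card {y : W // y ∉ Set.range ι} := by
    rw [Nat.card_congr ⟨Φ, χ, hΦχ, hχΦ⟩]
    exact Nat.card_sum
  have hsub : Nat.card {y : W // y ∉ Set.range ι} + Fintype.card X = Fintype.card W := by
    rw [Nat.card_eq_fintype_card, Fintype.card_subtype_compl]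
    have h1 : Fintype.card {y : W // y ∈ Set.range ι} = Fintype.card X :=
      Set.card_range_of_injective ι.injective
    rw [h1]
    have := Fintype.card_le_of_injective ι ι.injective
    omega
  omega



end HypAux

namespace HypAux




variable {α β : Type} [DecidableEq α] [DecidableEq β]
set_option linter.unusedSectionVars false
set_option maxHeartbeats 1000000

variable (H : Hypergraph' α β)

/-- The subgraph of `Bip H` consisting of edges whose hyperedge endpoint lies in `E'`. -/
def bipRestr (E' : Finset β) : SimpleGraph (↥H.V ⊕ ↥H.E) :=
  SimpleGraph.fromRel (fun x y =>
    ∃ (v : ↥H.V) (e : ↥H.E), x = Sum.inl v ∧ y = Sum.inr e ∧ (e : β) ∈ E' ∧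
      (v : α) ∈ H.incid (e : β))

/-- The subgraph of `Bip H` consisting of edges whose hyperedge endpoint is outside `E'`. -/
def bipRestrC (E' : Finset β) : SimpleGraph (↥H.V ⊕ ↥H.E) :=
  SimpleGraph.fromRel (fun x y =>
    ∃ (v : ↥H.V) (e : ↥H.E), x = Sum.inl v ∧ y = Sum.inr e ∧ (e : β) ∉ E' ∧
      (v : α) ∈ H.incid (e : β))

variable {H}

lemma bip_adj_of {v : ↥H.V} {e : ↥H.E} (hv : (v : α) ∈ H.incid (e : β)) :
    H.Bip.Adj (Sum.inl v) (Sum.inr e) := by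
  rw [Hypergraph'.Bip, fromRel_adj]
  exact ⟨by simp, Or.inl ⟨v, e, rfl, rfl, hv⟩⟩

lemma bip_adj_cases {x y : ↥H.V ⊕ ↥H.E} (h : H.Bip.Adj x y) :
    ∃ (v : ↥H.V) (e : ↥H.E), (v : α) ∈ H.incid (e : β) ∧
      ((x = Sum.inl v ∧ y = Sum.inr e) ∨ (y = Sum.inl v ∧ x = Sum.inr e)) := by
  rw [Hypergraph'.Bip, fromRel_adj] at h
  rcases h.2 with ⟨v, e, h1, h2, h3⟩ | ⟨v, e, h1, h2, h3⟩
  · exact ⟨v, e, h3, Or.inl ⟨h1, h2⟩⟩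
  · exact ⟨v, e, h3, Or.inr ⟨h1, h2⟩⟩

lemma bipRestr_adj_of {E' : Finset β} {v : ↥H.V} {e : ↥H.E} (he : (e : β) ∈ E')
    (hv : (v : α) ∈ H.incid (e : β)) :
    (bipRestr H E').Adj (Sum.inl v) (Sum.inr e) := by
  rw [bipRestr, fromRel_adj]
  exact ⟨by simp, Or.inl ⟨v, e, rfl, rfl, he, hv⟩⟩

lemma bipRestr_adj_cases {E' : Finset β} {x y : ↥H.V ⊕ ↥H.E} (h : (bipRestr H E').Adj x y) :
    ∃ (v : ↥H.V) (e : ↥H.E), (e : β) ∈ E' ∧ (v : α) ∈ H.incid (e : β) ∧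
      ((x = Sum.inl v ∧ y = Sum.inr e) ∨ (y = Sum.inl v ∧ x = Sum.inr e)) := by
  rw [bipRestr, fromRel_adj] at h
  rcases h.2 with ⟨v, e, h1, h2, h3, h4⟩ | ⟨v, e, h1, h2, h3, h4⟩
  · exact ⟨v, e, h3, h4, Or.inl ⟨h1, h2⟩⟩
  · exact ⟨v, e, h3, h4, Or.inr ⟨h1, h2⟩⟩

lemma bipRestrC_adj_of {E' : Finset β} {v : ↥H.V} {e : ↥H.E} (he : (e : β) ∉ E')
    (hv : (v : α) ∈ H.incid (e : β)) :
    (bipRestrC H E').Adj (Sum.inl v) (Sum.inr e) := by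
  rw [bipRestrC, fromRel_adj]
  exact ⟨by simp, Or.inl ⟨v, e, rfl, rfl, he, hv⟩⟩

lemma bipRestrC_adj_cases {E' : Finset β} {x y : ↥H.V ⊕ ↥H.E} (h : (bipRestrC H E').Adj x y) :
    ∃ (v : ↥H.V) (e : ↥H.E), (e : β) ∉ E' ∧ (v : α) ∈ H.incid (e : β) ∧
      ((x = Sum.inl v ∧ y = Sum.inr e) ∨ (y = Sum.inl v ∧ x = Sum.inr e)) := by
  rw [bipRestrC, fromRel_adj] at h
  rcases h.2 with ⟨v, e, h1, h2, h3, h4⟩ | ⟨v, e, h1, h2, h3, h4⟩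
  · exact ⟨v, e, h3, h4, Or.inl ⟨h1, h2⟩⟩
  · exact ⟨v, e, h3, h4, Or.inr ⟨h1, h2⟩⟩

lemma bipRestr_le_bip {E' : Finset β} : bipRestr H E' ≤ H.Bip := by
  intro x y h
  obtain ⟨v, e, -, hv, hc⟩ := bipRestr_adj_cases h
  rcases hc with ⟨rfl, rfl⟩ | ⟨rfl, rfl⟩
  · exact bip_adj_of hv
  · exact (bip_adj_of hv).symm

lemma bipRestrC_le_bip {E' : Finset β} : bipRestrC H E' ≤ H.Bip := by
  intro x y h
  obtain ⟨v, e, -, hv, hc⟩ := bipRestrC_adj_cases h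
  rcases hc with ⟨rfl, rfl⟩ | ⟨rfl, rfl⟩
  · exact bip_adj_of hv
  · exact (bip_adj_of hv).symm

/-- The inclusion of the vertex set of `Bip H |_{E'}` into that of `Bip H`. -/
def incl (H : Hypergraph' α β) (E' : Finset β) (hE' : E' ⊆ H.E) :
    (↥(E'.biUnion H.incid) ⊕ ↥E') ↪ (↥H.V ⊕ ↥H.E) where
  toFun := Sum.map
    (fun v => ⟨v.1, by
      obtain ⟨e, he, hv⟩ := Finset.mem_biUnion.mp v.2
      exact H.incid_sub e (hE' he) hv⟩)
    (fun e => ⟨e.1, hE' e.2⟩)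
  inj' := Function.Injective.sumMap
    (fun a b h => Subtype.ext (by simpa using congrArg Subtype.val h))
    (fun a b h => Subtype.ext (by simpa using congrArg Subtype.val h))

lemma bipRestr_eq_map {E' : Finset β} (hE' : E' ⊆ H.E) :
    bipRestr H E' = (H.BipOn E').map (incl H E' hE') := by
  ext x y
  constructor
  · intro h
    obtain ⟨v, e, he, hv, hc⟩ := bipRestr_adj_cases h
    have hvmem : (v : α) ∈ E'.biUnion H.incid := Finset.mem_biUnion.mpr ⟨e.1, he, hv⟩
    have hadj : (H.BipOn E').Adj (Sum.inl ⟨v.1, hvmem⟩) (Sum.inr ⟨e.1, he⟩) := by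
      rw [Hypergraph'.BipOn, fromRel_adj]
      exact ⟨by simp, Or.inl ⟨⟨v.1, hvmem⟩, ⟨e.1, he⟩, rfl, rfl, hv⟩⟩
    rcases hc with ⟨rfl, rfl⟩ | ⟨rfl, rfl⟩
    · exact ⟨(incl H E' hE').injective.ne hadj.ne, _, _, hadj, by simp [incl, Sum.map], by simp [incl, Sum.map]⟩
    · exact ⟨(incl H E' hE').injective.ne hadj.symm.ne, _, _, hadj.symm, by simp [incl, Sum.map], by simp [incl, Sum.map]⟩
  · rintro ⟨-, x', y', hadj, rfl, rfl⟩
    rw [Hypergraph'.BipOn, fromRel_adj] at hadj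
    have main : ∀ (a b : ↥(E'.biUnion H.incid) ⊕ ↥E'),
        (∃ (v : ↥(E'.biUnion H.incid)) (e : ↥E'), a = Sum.inl v ∧ b = Sum.inr e ∧
          (v : α) ∈ H.incid (e : β)) →
        (bipRestr H E').Adj ((incl H E' hE') a) ((incl H E' hE') b) := by
      rintro a b ⟨v, e, rfl, rfl, hv⟩
      exact bipRestr_adj_of (e := ⟨e.1, hE' e.2⟩) e.2 hv
    rcases hadj.2 with h | h
    · exact main _ _ h
    · exact (main _ _ h).symm

/-- The set of vertices of `Bip H` corresponding to hyperedges in `E'`. -/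
def inrS (H : Hypergraph' α β) (E' : Finset β) (hE' : E' ⊆ H.E) : Finset (↥H.V ⊕ ↥H.E) :=
  E'.attach.image (fun e => Sum.inr ⟨e.1, hE' e.2⟩)

lemma mem_inrS {E' : Finset β} {hE' : E' ⊆ H.E} {z : ↥H.V ⊕ ↥H.E} :
    z ∈ inrS H E' hE' ↔ ∃ e : ↥H.E, z = Sum.inr e ∧ (e : β) ∈ E' := by
  constructor
  · intro hz
    obtain ⟨x, hx, rfl⟩ := Finset.mem_image.mp hz
    exact ⟨⟨x.1, hE' x.2⟩, rfl, x.2⟩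
  · rintro ⟨e, rfl, he⟩
    exact Finset.mem_image.mpr ⟨⟨e.1, he⟩, Finset.mem_attach _ _, rfl⟩

lemma inl_not_mem_inrS {E' : Finset β} {hE' : E' ⊆ H.E} (v : ↥H.V) :
    Sum.inl v ∉ inrS H E' hE' := by
  rw [mem_inrS]
  rintro ⟨e, h, -⟩
  exact Sum.inl_ne_inr h

lemma inr_mem_inrS {E' : Finset β} {hE' : E' ⊆ H.E} {e : ↥H.E} :
    Sum.inr e ∈ inrS H E' hE' ↔ (e : β) ∈ E' := by
  rw [mem_inrS]
  constructor
  · rintro ⟨e', h, he'⟩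
    cases Sum.inr_injective h
    exact he'
  · intro he
    exact ⟨e, rfl, he⟩

/-- Edges of `bipRestr` have exactly one endpoint in `inrS`. -/
lemma bipRestr_one_endpoint {E' : Finset β} (hE' : E' ⊆ H.E) {B : SimpleGraph (↥H.V ⊕ ↥H.E)}
    (hB : B ≤ bipRestr H E') :
    ∀ a b, B.Adj a b → (a ∈ inrS H E' hE' ↔ b ∉ inrS H E' hE') := by
  intro a b hab
  obtain ⟨v, e, he, hv, hc⟩ := bipRestr_adj_cases (hB hab)
  rcases hc with ⟨rfl, rfl⟩ | ⟨rfl, rfl⟩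
  · exact iff_of_false (inl_not_mem_inrS v) (not_not_intro (inr_mem_inrS.mpr he))
  · exact iff_of_true (inr_mem_inrS.mpr he) (inl_not_mem_inrS v)





variable {α β : Type} [DecidableEq α] [DecidableEq β]
set_option linter.unusedSectionVars false
set_option maxHeartbeats 1000000

lemma part1 (H : Hypergraph' α β) (hconn : H.Bip.Connected)
    (E' : Finset β) (hE' : E' ⊆ H.E) (hne : E'.Nonempty) :
    ∃ f : β → ℕ, H.IsHypertree f ∧ (∑ e ∈ E', (f e : ℤ)) = H.mu E' := by
  classical
  obtain ⟨e₀, he₀⟩ := hne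
  have he₀E : e₀ ∈ H.E := hE' he₀
  obtain ⟨v₀, hv₀⟩ := H.incid_nonempty e₀ he₀E
  have hv₀V : v₀ ∈ H.V := H.incid_sub e₀ he₀E hv₀
  have hWne : Nonempty (↥H.V ⊕ ↥H.E) := ⟨Sum.inl ⟨v₀, hv₀V⟩⟩
  set L := bipRestr H E' with hL
  obtain ⟨B₀, -, hB₀L, hB₀acyc, hB₀reach⟩ :=
    exists_max_forest L.edgeSet.ncard L ⊥ (by simp) bot_le isAcyclic_bot
  set M := B₀ ⊔ bipRestrC H E' with hM
  have hM_adj : ∀ a b, H.Bip.Adj a b → M.Reachable a b := by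
    intro a b hab
    obtain ⟨v, e, hv, hc⟩ := bip_adj_cases hab
    have hsuff : M.Reachable (Sum.inl v) (Sum.inr e) := by
      by_cases he : (e : β) ∈ E'
      · have h1 : L.Adj (Sum.inl v) (Sum.inr e) := bipRestr_adj_of he hv
        exact (hB₀reach _ _ h1.reachable).mono le_sup_left
      · exact ((bipRestrC_adj_of he hv).reachable).mono le_sup_right
    rcases hc with ⟨rfl, rfl⟩ | ⟨rfl, rfl⟩
    · exact hsuff
    · exact hsuff.symm
  have hMconn : M.Connected := ⟨fun a b => reach_mono hM_adj (hconn.preconnected a b)⟩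
  obtain ⟨T, hB₀T, hTM, hTacyc, hTreach⟩ :=
    exists_max_forest M.edgeSet.ncard M B₀ (Nat.le_add_left _ _) le_sup_left hB₀acyc
  have hTconn : T.Connected := ⟨fun a b => hTreach a b (hMconn.preconnected a b)⟩
  have hTtree : T.IsTree := ⟨hTconn, hTacyc⟩
  have hTBip : T ≤ H.Bip :=
    hTM.trans (sup_le (hB₀L.trans bipRestr_le_bip) bipRestrC_le_bip)
  have hdegpos : ∀ e : ↥H.E, 0 < degr T (Sum.inr e) :=
    fun e => degr_pos hTconn (by simp : (Sum.inr e : ↥H.V ⊕ ↥H.E) ≠ Sum.inl ⟨v₀, hv₀V⟩)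
  set S := inrS H E' hE' with hS
  have hdeg_eq : ∀ z ∈ S, degr T z = degr B₀ z := by
    intro z hz
    obtain ⟨e, rfl, he⟩ := mem_inrS.mp hz
    have hset : T.neighborSet (Sum.inr e) = B₀.neighborSet (Sum.inr e) := by
      ext t
      constructor
      · intro ht
        rcases (hTM ht) with h | h
        · exact h
        · exfalso
          obtain ⟨v', e', he', hv', hc⟩ := bipRestrC_adj_cases h
          rcases hc with ⟨h1, -⟩ | ⟨-, h1⟩
          · exact Sum.inr_ne_inl h1
          · cases Sum.inr_injective h1
            exact he' he
      · intro ht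
        exact hB₀T ht
    rw [degr, degr, hset]
  have hsum1 : ∑ z ∈ S, degr B₀ z = B₀.edgeSet.ncard :=
    sum_degr_eq_card_edges (bipRestr_one_endpoint hE' hB₀L)
  have hB₀count : B₀.edgeSet.ncard + Nat.card B₀.ConnectedComponent
      = Fintype.card (↥H.V ⊕ ↥H.E) := acyclic_card_edgeSet _ B₀ rfl hB₀acyc
  have hccB₀L : Nat.card B₀.ConnectedComponent = Nat.card L.ConnectedComponent :=
    cc_card_eq_of_reach (fun a b => ⟨fun h => h.mono hB₀L, fun h => hB₀reach a b h⟩)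
  have hLcount : Nat.card L.ConnectedComponent + ((E'.biUnion H.incid).card + E'.card)
      = H.compCount E' + Fintype.card (↥H.V ⊕ ↥H.E) := by
    have hmap := cc_card_map (incl H E' hE') (H.BipOn E')
    rw [← bipRestr_eq_map hE'] at hmap
    rw [hL]
    rw [Hypergraph'.compCount]
    rw [← hmap, Fintype.card_sum, Fintype.card_coe, Fintype.card_coe]
  -- the hypertree vector
  refine ⟨fun b => if h : b ∈ H.E then degr T (Sum.inr ⟨b, h⟩) - 1 else 0,
    ⟨T, ⟨hTBip, hTtree⟩, fun e he => dif_neg he, fun e => ?_⟩, ?_⟩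
  · simp only [dif_pos e.2]
    show degr T (Sum.inr e) = degr T (Sum.inr e) - 1 + 1
    have := hdegpos e
    omega
  · -- the sum computation
    have hinj : ∀ x ∈ E'.attach, ∀ y ∈ E'.attach,
        (Sum.inr ⟨x.1, hE' x.2⟩ : ↥H.V ⊕ ↥H.E) = Sum.inr ⟨y.1, hE' y.2⟩ → x = y := by
      intro x _ y _ h
      exact Subtype.ext (by simpa using congrArg Subtype.val (Sum.inr_injective h))
    have hsumS : ∑ z ∈ S, (degr T z : ℤ)
        = ∑ x ∈ E'.attach, (degr T (Sum.inr ⟨x.1, hE' x.2⟩) : ℤ) := by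
      rw [hS, inrS, Finset.sum_image hinj]
    have hsumf : ∑ e ∈ E', ((if h : e ∈ H.E then degr T (Sum.inr ⟨e, h⟩) - 1 else 0 : ℕ) : ℤ)
        = ∑ x ∈ E'.attach, ((degr T (Sum.inr ⟨x.1, hE' x.2⟩) : ℤ) - 1) := by
      rw [← Finset.sum_attach E'
        (fun e => ((if h : e ∈ H.E then degr T (Sum.inr ⟨e, h⟩) - 1 else 0 : ℕ) : ℤ))]
      apply Finset.sum_congr rfl
      intro x _
      rw [dif_pos (hE' x.2)]
      have := hdegpos ⟨x.1, hE' x.2⟩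
      push_cast [Nat.cast_sub this]
      ring
    have hcardsum : ∑ x ∈ E'.attach, ((degr T (Sum.inr ⟨x.1, hE' x.2⟩) : ℤ) - 1)
        = (∑ x ∈ E'.attach, (degr T (Sum.inr ⟨x.1, hE' x.2⟩) : ℤ)) - E'.card := by
      rw [Finset.sum_sub_distrib, Finset.sum_const, Finset.card_attach]
      simp
    have hdegsum : ∑ z ∈ S, degr T z = ∑ z ∈ S, degr B₀ z :=
      Finset.sum_congr rfl hdeg_eq
    have hcast : ∑ z ∈ S, (degr T z : ℤ) = ((∑ z ∈ S, degr T z : ℕ) : ℤ) := by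
      push_cast
      rfl
    rw [Hypergraph'.mu]
    rw [hsumf, hcardsum, ← hsumS, hcast]
    have h1 : ∑ z ∈ S, degr T z = B₀.edgeSet.ncard := by rw [hdegsum, hsum1]
    rw [h1]
    omega





variable {α β : Type} [DecidableEq α] [DecidableEq β]
set_option linter.unusedSectionVars false
set_option maxHeartbeats 1000000

lemma part2 (H : Hypergraph' α β) (f : β → ℕ) (hf : H.IsHypertree f)
    (E' : Finset β) (hE' : E' ⊆ H.E) (hne : E'.Nonempty)
    (hlt : (∑ e ∈ E', (f e : ℤ)) < H.mu E') :
    ∃ a ∈ H.E \ E', ∃ b ∈ E', H.TransferPossible f a b := by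
  classical
  obtain ⟨T, ⟨hTBip, hTtree⟩, hf0, hfdeg⟩ := hf
  have hTconn : T.Connected := hTtree.isConnected
  have hTacyc : T.IsAcyclic := hTtree.2
  set S := inrS H E' hE' with hS
  set L := bipRestr H E' with hL
  set B₁ := SimpleGraph.fromRel (fun x y => T.Adj x y ∧ x ∈ S) with hB₁
  have hB₁adj : ∀ x y, B₁.Adj x y ↔ T.Adj x y ∧ (x ∈ S ∨ y ∈ S) := by
    intro x y
    rw [hB₁, fromRel_adj]
    constructor
    · rintro ⟨hne', ⟨h1, h2⟩ | ⟨h1, h2⟩⟩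
      · exact ⟨h1, Or.inl h2⟩
      · exact ⟨h1.symm, Or.inr h2⟩
    · rintro ⟨h1, h2 | h2⟩
      · exact ⟨h1.ne, Or.inl ⟨h1, h2⟩⟩
      · exact ⟨h1.ne, Or.inr ⟨h1.symm, h2⟩⟩
  have hB₁T : B₁ ≤ T := by
    intro x y h
    exact ((hB₁adj x y).mp h).1
  have hB₁L : B₁ ≤ L := by
    intro x y h
    obtain ⟨hT, hSm⟩ := (hB₁adj x y).mp h
    obtain ⟨v, e, hv, hc⟩ := bip_adj_cases (hTBip hT)
    rcases hc with ⟨rfl, rfl⟩ | ⟨rfl, rfl⟩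
    · rcases hSm with h2 | h2
      · exact absurd h2 (inl_not_mem_inrS v)
      · exact bipRestr_adj_of (inr_mem_inrS.mp h2) hv
    · rcases hSm with h2 | h2
      · exact (bipRestr_adj_of (inr_mem_inrS.mp h2) hv).symm
      · exact absurd h2 (inl_not_mem_inrS v)
  have hdeg_eqS : ∀ z ∈ S, degr B₁ z = degr T z := by
    intro z hz
    rw [degr, degr]
    congr 1
    ext t
    simp only [mem_neighborSet]
    rw [hB₁adj]
    exact ⟨fun h => h.1, fun h => ⟨h, Or.inl hz⟩⟩
  have hB₁acyc : B₁.IsAcyclic := isAcyclic_anti hB₁T hTacyc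
  have hsum1 : ∑ z ∈ S, degr B₁ z = B₁.edgeSet.ncard :=
    sum_degr_eq_card_edges (bipRestr_one_endpoint hE' hB₁L)
  have hB₁count : B₁.edgeSet.ncard + Nat.card B₁.ConnectedComponent
      = Fintype.card (↥H.V ⊕ ↥H.E) := acyclic_card_edgeSet _ B₁ rfl hB₁acyc
  have hLcount : Nat.card L.ConnectedComponent + ((E'.biUnion H.incid).card + E'.card)
      = H.compCount E' + Fintype.card (↥H.V ⊕ ↥H.E) := by
    have hmap := cc_card_map (incl H E' hE') (H.BipOn E')
    rw [← bipRestr_eq_map hE'] at hmap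
    rw [hL, Hypergraph'.compCount]
    rw [← hmap, Fintype.card_sum, Fintype.card_coe, Fintype.card_coe]
  -- translate the sum hypothesis
  have hinj : ∀ x ∈ E'.attach, ∀ y ∈ E'.attach,
      (Sum.inr ⟨x.1, hE' x.2⟩ : ↥H.V ⊕ ↥H.E) = Sum.inr ⟨y.1, hE' y.2⟩ → x = y := by
    intro x _ y _ h
    exact Subtype.ext (by simpa using congrArg Subtype.val (Sum.inr_injective h))
  have hsumSnat : ∑ z ∈ S, degr T z
      = ∑ x ∈ E'.attach, degr T (Sum.inr ⟨x.1, hE' x.2⟩) := by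
    rw [hS, inrS, Finset.sum_image hinj]
  have hkey : ∑ e ∈ E', (f e : ℤ)
      = ((∑ z ∈ S, degr T z : ℕ) : ℤ) - E'.card := by
    rw [← Finset.sum_attach E' (fun e => (f e : ℤ))]
    have hpt : ∀ x ∈ E'.attach, (f x.1 : ℤ)
        = (degr T (Sum.inr ⟨x.1, hE' x.2⟩) : ℤ) - 1 := by
      intro x _
      rw [hfdeg ⟨x.1, hE' x.2⟩]
      push_cast
      ring
    rw [Finset.sum_congr rfl hpt, Finset.sum_sub_distrib, Finset.sum_const, card_attach]
    rw [hsumSnat]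
    push_cast
    simp
  have hdegsum : ∑ z ∈ S, degr T z = B₁.edgeSet.ncard := by
    rw [← hsum1]
    exact Finset.sum_congr rfl (fun z hz => (hdeg_eqS z hz).symm)
  -- component count comparison
  have hcc_lt : Nat.card L.ConnectedComponent < Nat.card B₁.ConnectedComponent := by
    rw [Hypergraph'.mu] at hlt
    rw [hkey, hdegsum] at hlt
    omega
  -- find an `L`-edge with endpoints in different components of `B₁`
  have hbad : ¬ ∀ a b, L.Adj a b → B₁.Reachable a b := by
    intro hall
    have heq : ∀ a b, B₁.Reachable a b ↔ L.Reachable a b :=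
      fun a b => ⟨fun h => h.mono hB₁L, fun h => reach_mono hall h⟩
    have := cc_card_eq_of_reach heq
    omega
  push_neg at hbad
  obtain ⟨x, y, hLxy, hnr⟩ := hbad
  obtain ⟨v, e, heE', hv, hc⟩ := bipRestr_adj_cases hLxy
  have hnr' : ¬ B₁.Reachable (Sum.inl v) (Sum.inr e) := by
    rcases hc with ⟨rfl, rfl⟩ | ⟨rfl, rfl⟩
    · exact hnr
    · exact fun h => hnr h.symm
  have hTnadj : ¬ T.Adj (Sum.inl v) (Sum.inr e) := by
    intro h
    exact hnr' (Adj.reachable ((hB₁adj _ _).mpr ⟨h, Or.inr (inr_mem_inrS.mpr heE')⟩))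
  obtain ⟨p, hp, hup⟩ := hTtree.existsUnique_path (Sum.inl v) (Sum.inr e)
  -- find an edge of `p` not incident to `S`
  by_cases hall2 : ∀ a b, s(a, b) ∈ p.edges → (a ∈ S ∨ b ∈ S)
  · exfalso
    apply hnr'
    have hsub : ∀ ed ∈ p.edges, ed ∈ B₁.edgeSet := by
      intro ed hed
      induction ed using Sym2.ind with
      | _ a b =>
      rw [mem_edgeSet, hB₁adj]
      exact ⟨p.adj_of_mem_edges hed, hall2 a b hed⟩
    exact ⟨p.transfer B₁ hsub⟩
  · push_neg at hall2
    obtain ⟨a, b, hab_mem, haS, hbS⟩ := hall2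
    have hTab : T.Adj a b := p.adj_of_mem_edges hab_mem
    obtain ⟨v', e', hv', hc'⟩ := bip_adj_cases (hTBip hTab)
    -- normalize the orientation
    have hmain : s(Sum.inl v', Sum.inr e') ∈ p.edges ∧ (Sum.inr e' : ↥H.V ⊕ ↥H.E) ∉ S := by
      rcases hc' with ⟨rfl, rfl⟩ | ⟨rfl, rfl⟩
      · exact ⟨hab_mem, hbS⟩
      · rw [Sym2.eq_swap] at hab_mem
        exact ⟨hab_mem, haS⟩
    obtain ⟨hmem_p, he'S⟩ := hmain
    have he'notE' : (e' : β) ∉ E' := fun h => he'S (inr_mem_inrS.mpr h)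
    have hTv'e' : T.Adj (Sum.inl v') (Sum.inr e') := p.adj_of_mem_edges hmem_p
    have hee' : e ≠ e' := by
      intro h
      exact he'notE' (h ▸ heE')
    -- the new tree
    set T' := T.deleteEdges {s(Sum.inl v', Sum.inr e')} ⊔ edge (Sum.inl v) (Sum.inr e)
      with hT'
    have hdelnr : ¬ (T.deleteEdges {s(Sum.inl v', Sum.inr e')}).Reachable
        (Sum.inl v) (Sum.inr e) := by
      rintro ⟨q⟩
      have hsub' : ∀ ed ∈ q.edges, ed ∈ T.edgeSet := by
        intro ed hed
        have := q.edges_subset_edgeSet hed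
        rw [edgeSet_deleteEdges] at this
        exact this.1
      have hqe : ∀ ed ∈ q.edges, ed ≠ s(Sum.inl v', Sum.inr e') := by
        intro ed hed
        have := q.edges_subset_edgeSet hed
        rw [edgeSet_deleteEdges] at this
        exact fun h => this.2 (h ▸ rfl)
      set q' := q.transfer T hsub' with hq'
      have hqp := hup (q'.toPath : T.Walk (Sum.inl v) (Sum.inr e)) (q'.toPath.2)
      have hmem_q : s(Sum.inl v', Sum.inr e') ∈ q'.edges := by
        apply Walk.edges_toPath_subset
        rw [hqp]
        exact hmem_p
      rw [Walk.edges_transfer] at hmem_q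
      exact hqe _ hmem_q rfl
    have hdelacyc : (T.deleteEdges {s(Sum.inl v', Sum.inr e')}).IsAcyclic :=
      isAcyclic_anti (deleteEdges_le _) hTacyc
    have hT'acyc : T'.IsAcyclic := acyclic_sup_edge hdelacyc hdelnr
    have hT'adjreach : ∀ c d, T.Adj c d → T'.Reachable c d := by
      have hreach_ab : T'.Reachable (Sum.inl v') (Sum.inr e') := by
        set Tplus := T ⊔ edge (Sum.inl v) (Sum.inr e) with hTplus
        have hple : T ≤ Tplus := le_sup_left
        set pm := p.transfer Tplus (fun ed hed =>
          edgeSet_mono hple (p.edges_subset_edgeSet hed)) with hpm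
        have hpm_path : pm.IsPath := hp.transfer _
        have hpm_edges : pm.edges = p.edges := Walk.edges_transfer _ _
        have hyx : Tplus.Adj (Sum.inr e) (Sum.inl v) := by
          right
          rw [edge_adj]
          exact ⟨Or.inr ⟨rfl, rfl⟩, by simp⟩
        have hc₀ : (Walk.cons hyx pm).IsCycle := by
          rw [Walk.cons_isCycle_iff]
          refine ⟨hpm_path, ?_⟩
          rw [hpm_edges]
          intro hmem
          exact hTnadj (p.adj_of_mem_edges hmem).symm
        have hmem₀ : s(Sum.inl v', Sum.inr e') ∈ (Walk.cons hyx pm).edges := by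
          rw [Walk.edges_cons]
          right
          rw [hpm_edges]
          exact hmem_p
        have hreach0 := (adj_and_reachable_delete_edges_iff_exists_cycle.mpr
          ⟨_, _, hc₀, hmem₀⟩).2
        have hle2 : Tplus \ fromEdgeSet {s(Sum.inl v', Sum.inr e')} ≤ T' := by
          intro c d hcd
          obtain ⟨h1, h2⟩ := hcd
          rcases h1 with h1 | h1
          · exact Or.inl ⟨h1, h2⟩
          · exact Or.inr h1
        exact hreach0.mono hle2
      intro c d hcd
      by_cases hcd_eq : s(c, d) = s(Sum.inl v', Sum.inr e')
      · rw [Sym2.eq_iff] at hcd_eq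
        rcases hcd_eq with ⟨rfl, rfl⟩ | ⟨rfl, rfl⟩
        · exact hreach_ab
        · exact hreach_ab.symm
      · refine Adj.reachable (Or.inl ⟨hcd, ?_⟩)
        rw [fromEdgeSet_adj]
        rintro ⟨h1, -⟩
        exact hcd_eq h1
    have hWne : Nonempty (↥H.V ⊕ ↥H.E) := ⟨Sum.inl v⟩
    have hT'conn : T'.Connected :=
      ⟨fun c d => reach_mono hT'adjreach (hTconn.preconnected c d)⟩
    have hT'tree : T'.IsTree := ⟨hT'conn, hT'acyc⟩
    have hT'Bip : T' ≤ H.Bip := by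
      apply sup_le ((deleteEdges_le _).trans hTBip)
      intro c d hcd
      rw [edge_adj] at hcd
      rcases hcd.1 with ⟨rfl, rfl⟩ | ⟨rfl, rfl⟩
      · exact bip_adj_of hv
      · exact (bip_adj_of hv).symm
    -- degree computations
    have dg1 : degr T' (Sum.inr e) = degr T (Sum.inr e) + 1 := by
      have hset : T'.neighborSet (Sum.inr e)
          = insert (Sum.inl v) (T.neighborSet (Sum.inr e)) := by
        ext t
        simp only [mem_neighborSet, Set.mem_insert_iff]
        constructor
        · rintro (⟨h1, -⟩ | h1)
          · exact Or.inr h1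
          · rw [edge_adj] at h1
            rcases h1.1 with ⟨h2, -⟩ | ⟨-, h2⟩
            · exact absurd h2 (by simp)
            · exact Or.inl h2
        · rintro (rfl | h1)
          · refine Or.inr ?_
            rw [edge_adj]
            exact ⟨Or.inr ⟨rfl, rfl⟩, by simp⟩
          · refine Or.inl ⟨h1, ?_⟩
            rw [fromEdgeSet_adj]
            rintro ⟨h2, -⟩
            rw [Set.mem_singleton_iff, Sym2.eq_iff] at h2
            rcases h2 with ⟨h3, -⟩ | ⟨h3, -⟩
            · exact Sum.inr_ne_inl h3
            · cases Sum.inr_injective h3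
              exact hee' rfl
      rw [degr, degr, hset,
        Set.ncard_insert_of_notMem
          (fun h => hTnadj (((T.mem_neighborSet _ _).mp h).symm)) (Set.toFinite _)]
    have dg2 : degr T (Sum.inr e') = degr T' (Sum.inr e') + 1 := by
      have hset : T'.neighborSet (Sum.inr e')
          = T.neighborSet (Sum.inr e') \ {Sum.inl v'} := by
        ext t
        simp only [mem_neighborSet, Set.mem_diff, Set.mem_singleton_iff]
        constructor
        · rintro (⟨h1, h2⟩ | h1)
          · refine ⟨h1, ?_⟩
            rintro rfl
            apply h2
            rw [fromEdgeSet_adj, Set.mem_singleton_iff]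
            exact ⟨Sym2.eq_swap, h1.ne⟩
          · exfalso
            rw [edge_adj] at h1
            rcases h1.1 with ⟨h2, -⟩ | ⟨h2, -⟩
            · exact Sum.inr_ne_inl h2
            · cases Sum.inr_injective h2
              exact hee' rfl
        · rintro ⟨h1, h2⟩
          refine Or.inl ⟨h1, ?_⟩
          rw [fromEdgeSet_adj]
          rintro ⟨h3, -⟩
          rw [Set.mem_singleton_iff, Sym2.eq_iff] at h3
          rcases h3 with ⟨h4, -⟩ | ⟨-, h4⟩
          · exact Sum.inr_ne_inl h4
          · exact h2 h4
      rw [degr, degr, hset]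
      exact (Set.ncard_diff_singleton_add_one
        ((T.mem_neighborSet _ _).mpr hTv'e'.symm) (Set.toFinite _)).symm
    have dg3 : ∀ ee : ↥H.E, ee ≠ e → ee ≠ e' → degr T' (Sum.inr ee) = degr T (Sum.inr ee) := by
      intro ee h1 h2
      have hset : T'.neighborSet (Sum.inr ee) = T.neighborSet (Sum.inr ee) := by
        ext t
        simp only [mem_neighborSet]
        constructor
        · rintro (⟨h3, -⟩ | h3)
          · exact h3
          · exfalso
            rw [edge_adj] at h3
            rcases h3.1 with ⟨h4, -⟩ | ⟨h4, -⟩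
            · exact Sum.inr_ne_inl h4
            · cases Sum.inr_injective h4
              exact h1 rfl
        · intro h3
          refine Or.inl ⟨h3, ?_⟩
          rw [fromEdgeSet_adj]
          rintro ⟨h4, -⟩
          rw [Set.mem_singleton_iff, Sym2.eq_iff] at h4
          rcases h4 with ⟨h5, -⟩ | ⟨h5, -⟩
          · exact Sum.inr_ne_inl h5
          · cases Sum.inr_injective h5
            exact h2 rfl
      rw [degr, degr, hset]
    have hfe' : degr T (Sum.inr e') = f (e' : β) + 1 := hfdeg e'
    have hfe'T' : f (e' : β) = degr T' (Sum.inr e') := by omega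
    have hpos : 0 < f (e' : β) := by
      rw [hfe'T']
      exact degr_pos hT'conn (by simp : (Sum.inr e' : ↥H.V ⊕ ↥H.E) ≠ Sum.inl v)
    refine ⟨(e' : β), Finset.mem_sdiff.mpr ⟨e'.2, he'notE'⟩, (e : β), heE', hpos,
      T', ⟨hT'Bip, hT'tree⟩, ?_, ?_⟩
    · intro x hx
      simp only [transferFun]
      rw [if_neg (by rintro rfl; exact hx e'.2), if_neg (by rintro rfl; exact hx (hE' heE'))]
      exact hf0 x hx
    · intro ee
      by_cases h1 : ee = e'
      · subst h1
        have ht : transferFun f (ee : β) (e : β) (ee : β) = f (ee : β) - 1 := by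
          simp [transferFun]
        rw [ht]
        omega
      · by_cases h2 : ee = e
        · subst h2
          have hne2 : (ee : β) ≠ (e' : β) := fun h => h1 (Subtype.ext h)
          have ht : transferFun f (e' : β) (ee : β) (ee : β) = f (ee : β) + 1 := by
            simp [transferFun, hne2]
          rw [ht, dg1, hfdeg ee]
        · have hne2 : (ee : β) ≠ (e' : β) := fun h => h1 (Subtype.ext h)
          have hne3 : (ee : β) ≠ (e : β) := fun h => h2 (Subtype.ext h)
          have ht : transferFun f (e' : β) (e : β) (ee : β) = f (ee : β) := by
            simp [transferFun, hne2, hne3]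
          rw [ht, dg3 ee h2 h1, hfdeg ee]


end HypAux

/-- inequality (2) can be made sharp on any given nonempty `E'`, and if
it is not sharp at a hypertree `f`, then `f` admits a transfer of valence from outside
`E'` into `E'`. -/
theorem sharp_and_transfer (H : Hypergraph' α β) (hconn : H.Bip.Connected) :
    (∀ E' : Finset β, E' ⊆ H.E → E'.Nonempty →
      ∃ f : β → ℕ, H.IsHypertree f ∧ (∑ e ∈ E', (f e : ℤ)) = H.mu E') ∧
    (∀ f : β → ℕ, H.IsHypertree f →
      ∀ E' : Finset β, E' ⊆ H.E → E'.Nonempty →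
      (∑ e ∈ E', (f e : ℤ)) < H.mu E' →
      ∃ a ∈ H.E \ E', ∃ b ∈ E', H.TransferPossible f a b) := by
  constructor
  · intro E' hE' hne
    exact HypAux.part1 H hconn E' hE' hne
  · intro f hf E' hE' hne hlt
    exact HypAux.part2 H f hf E' hE' hne hlt
end
end

section
/- Let H = (V, E) be a hypergraph with Bip H connected and with its hyperedges linearly ordered, and let g be the greedy hypertree of this order. If f : E → ℕ is a hypertree and e ∈ E is a hyperedge with f(e) > g(e), then there exists a hyperedge x < e such that f is such that a transfer of valence is possible from e to x. -/
open SimpleGraph Finset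
open scoped Classical

noncomputable section

variable {α β : Type} [DecidableEq α] [DecidableEq β]

/-- A hypergraph: a finite set `V` of vertices, a finite (index) set `E` of hyperedges,
where the hyperedge indexed by `e ∈ E` is the nonempty set `incid e ⊆ V` of its vertices.
(Indexing hyperedges by a type allows multiset multiplicities, as in the paper.) -/
structure HGraph (α β : Type) where
  V : Finset α
  E : Finset β
  incid : β → Finset α
  incid_sub : ∀ e ∈ E, incid e ⊆ V
  incid_nonempty : ∀ e ∈ E, (incid e).Nonempty

namespace HGraph

variable (H : HGraph α β)

/-- The bipartite graph associated to a hypergraph: color classes `V` and `E`,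
with `v` joined to `e` iff `v ∈ incid e`. -/
def Bip : SimpleGraph (↥H.V ⊕ ↥H.E) :=
  SimpleGraph.fromRel (fun x y =>
    ∃ (v : ↥H.V) (e : ↥H.E), x = Sum.inl v ∧ y = Sum.inr e ∧ (v : α) ∈ H.incid (e : β))

/-- A spanning tree of the associated bipartite graph. -/
def IsSpanningTree (T : SimpleGraph (↥H.V ⊕ ↥H.E)) : Prop :=
  T ≤ H.Bip ∧ T.IsTree

/-- `T` is a spanning tree of `Bip H` realizing the vector `f` (a function on the
hyperedges, encoded as a function on `β` vanishing off `E`): `T` has degree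
`f e + 1` at each hyperedge `e`. -/
def Realizes (T : SimpleGraph (↥H.V ⊕ ↥H.E)) (f : β → ℕ) : Prop :=
  H.IsSpanningTree T ∧ (∀ e, e ∉ H.E → f e = 0) ∧
    ∀ e : ↥H.E, degr T (Sum.inr e) = f (e : β) + 1

/-- A hypertree is a vector realized by some spanning tree of `Bip H`. -/
def IsHypertree (f : β → ℕ) : Prop := ∃ T, H.Realizes T f

/-- The bipartite graph `Bip H |_{E'}` induced by a subset `E'` of hyperedges:
color classes `∪E'` and `E'`. -/
def BipOn (E' : Finset β) : SimpleGraph (↥(E'.biUnion H.incid) ⊕ ↥E') :=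
  SimpleGraph.fromRel (fun x y =>
    ∃ (v : ↥(E'.biUnion H.incid)) (e : ↥E'),
      x = Sum.inl v ∧ y = Sum.inr e ∧ (v : α) ∈ H.incid (e : β))

/-- `c(E')`: the number of connected components of `Bip H |_{E'}`. -/
def compCount (E' : Finset β) : ℕ := Nat.card (H.BipOn E').ConnectedComponent

/-- `μ(E') = |∪E'| − c(E')` (and `μ(∅) = 0`). -/
def mu (E' : Finset β) : ℤ :=
  ((E'.biUnion H.incid).card : ℤ) - (H.compCount E' : ℤ)

/-- `f` is such that a transfer of valence is possible from `a` to `b`. -/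
def TransferPossible (f : β → ℕ) (a b : β) : Prop :=
  0 < f a ∧ H.IsHypertree (transferFun f a b)

/-- `e` is internally active w.r.t. the hypertree `f` and the order `o`. -/
def InternallyActive (o : LinearOrder β) (f : β → ℕ) (e : β) : Prop :=
  ∀ x ∈ H.E, o.lt x e → ¬ H.TransferPossible f e x

/-- `e` is externally active w.r.t. the hypertree `f` and the order `o`. -/
def ExternallyActive (o : LinearOrder β) (f : β → ℕ) (e : β) : Prop :=
  ∀ x ∈ H.E, o.lt x e → ¬ H.TransferPossible f x e

/-- `ῑ(f)`: the number of internally inactive hyperedges w.r.t. `f`. -/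
def intInact (o : LinearOrder β) (f : β → ℕ) : ℕ :=
  (H.E.filter (fun e => ¬ H.InternallyActive o f e)).card

/-- `ε̄(f)`: the number of externally inactive hyperedges w.r.t. `f`. -/
def extInact (o : LinearOrder β) (f : β → ℕ) : ℕ :=
  (H.E.filter (fun e => ¬ H.ExternallyActive o f e)).card

end HGraph

namespace HGraph

/-- The set `{x ∈ E | x ≤ e}` of hyperedges up to `e` in the order `o`. -/
def downSetLe (H : HGraph α β) (o : LinearOrder β) (e : β) : Finset β :=
  H.E.filter (fun x => o.le x e)

/-- The set `{x ∈ E | x < e}` of hyperedges strictly below `e` in the order `o`. -/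
def downSetLt (H : HGraph α β) (o : LinearOrder β) (e : β) : Finset β :=
  H.E.filter (fun x => o.lt x e)

/-- The nullity-jump function of the order `o`: `nj(e_k) = n(G_k) − n(G_{k−1})`. -/
def nj (H : HGraph α β) (o : LinearOrder β) (e : β) : ℕ :=
  nullity (H.BipOn (H.downSetLe o e)) - nullity (H.BipOn (H.downSetLt o e))

/-- The greedy vector of the order `o`: `g(e) = |e| − 1 − nj(e)`. -/
def greedy (H : HGraph α β) (o : LinearOrder β) : β → ℕ :=
  fun e => if e ∈ H.E then (H.incid e).card - 1 - H.nj o e else 0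

end HGraph

/-! ### Auxiliary generic graph lemmas -/

section AuxGraph

variable {W : Type}

open SimpleGraph

lemma reach_cases {G G' : SimpleGraph W} {x0 y0 : W}
    (hle : ∀ u v, G'.Adj u v → G.Adj u v ∨ (u = x0 ∧ v = y0) ∨ (u = y0 ∧ v = x0))
    {x y : W} (h : G'.Reachable x y) :
    G.Reachable x y ∨ (G.Reachable x x0 ∧ G.Reachable y0 y) ∨
      (G.Reachable x y0 ∧ G.Reachable x0 y) := by
  obtain ⟨p⟩ := h
  induction p with
  | nil => exact Or.inl (Reachable.refl _)
  | @cons v v' v'' hadj p ih =>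
    rcases hle _ _ hadj with hG | ⟨rfl, rfl⟩ | ⟨rfl, rfl⟩
    · rcases ih with h1 | ⟨h1, h2⟩ | ⟨h1, h2⟩
      · exact Or.inl (hG.reachable.trans h1)
      · exact Or.inr (Or.inl ⟨hG.reachable.trans h1, h2⟩)
      · exact Or.inr (Or.inr ⟨hG.reachable.trans h1, h2⟩)
    · rcases ih with h1 | ⟨h1, h2⟩ | ⟨h1, h2⟩
      · exact Or.inr (Or.inl ⟨Reachable.refl _, h1⟩)
      · exact Or.inl (h1.symm.trans h2)
      · exact Or.inl h2
    · rcases ih with h1 | ⟨h1, h2⟩ | ⟨h1, h2⟩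
      · exact Or.inr (Or.inr ⟨Reachable.refl _, h1⟩)
      · exact Or.inl h2
      · exact Or.inl (h1.symm.trans h2)

lemma adj_delete_cases {G : SimpleGraph W} {x0 y0 u v : W} (h : G.Adj u v) :
    (G.deleteEdges {s(x0, y0)}).Adj u v ∨ (u = x0 ∧ v = y0) ∨ (u = y0 ∧ v = x0) := by
  by_cases hq : s(u, v) = s(x0, y0)
  · rw [Sym2.eq_iff] at hq; tauto
  · exact Or.inl (by simp [h, hq])

lemma reach_delete_cases {G : SimpleGraph W} {x0 y0 x y : W} (h : G.Reachable x y) :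
    (G.deleteEdges {s(x0, y0)}).Reachable x y ∨
      ((G.deleteEdges {s(x0, y0)}).Reachable x x0 ∧ (G.deleteEdges {s(x0, y0)}).Reachable y0 y) ∨
      ((G.deleteEdges {s(x0, y0)}).Reachable x y0 ∧ (G.deleteEdges {s(x0, y0)}).Reachable x0 y) :=
  reach_cases (fun _ _ hadj => adj_delete_cases hadj) h

/-- Dichotomy: after deleting a single edge of a connected graph, every vertex can still
reach one of the two endpoints of the deleted edge. -/
lemma reach_delete_dichotomy {G : SimpleGraph W} (hG : G.Preconnected) (x0 y0 : W) (z : W) :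
    (G.deleteEdges {s(x0, y0)}).Reachable z x0 ∨ (G.deleteEdges {s(x0, y0)}).Reachable z y0 := by
  rcases reach_delete_cases (x0 := x0) (y0 := y0) (hG z y0) with h | ⟨h1, _⟩ | ⟨h1, _⟩
  · exact Or.inr h
  · exact Or.inl h1
  · exact Or.inr h1

/-- Swapping one edge of a tree across a cut yields a tree. -/
lemma swap_isTree {T : SimpleGraph W} (hTr : T.IsTree) {u v x y : W}
    (hadj : T.Adj u v) (hxy : x ≠ y) (hst : s(x, y) ≠ s(u, v))
    (hnr : ¬(T.deleteEdges {s(u, v)}).Reachable x y) :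
    (SimpleGraph.fromEdgeSet (insert s(x, y) (T.edgeSet \ {s(u, v)}))).IsTree := by
  classical
  set T' := SimpleGraph.fromEdgeSet (insert s(x, y) (T.edgeSet \ {s(u, v)})) with hT'def
  have hDle : T.deleteEdges {s(u, v)} ≤ T' := by
    intro p q hpq
    rw [SimpleGraph.deleteEdges_adj] at hpq
    rw [hT'def, SimpleGraph.fromEdgeSet_adj]
    exact ⟨Or.inr ⟨(SimpleGraph.mem_edgeSet _).mpr hpq.1, by simpa using hpq.2⟩, hpq.1.ne⟩
  have hT'a : T'.Adj x y := by
    rw [hT'def, SimpleGraph.fromEdgeSet_adj]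
    exact ⟨Or.inl rfl, hxy⟩
  have hdi := reach_delete_dichotomy (G := T) hTr.isConnected.preconnected u v
  have hkey : T'.Reachable u v := by
    rcases hdi x with hwu | hwe
    · rcases hdi y with hbu | hbe2
      · exact absurd (hwu.trans hbu.symm) hnr
      · exact ((hwu.mono hDle).symm.trans (hT'a.reachable.trans (hbe2.mono hDle)))
    · rcases hdi y with hbu | hbe2
      · exact ((hbu.mono hDle).symm.trans (hT'a.symm.reachable.trans (hwe.mono hDle)))
      · exact absurd (hwe.trans hbe2.symm) hnr
  have hconn' : T'.Connected := by
    rw [SimpleGraph.connected_iff_exists_forall_reachable]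
    refine ⟨v, fun z => ?_⟩
    rcases hdi z with h | h
    · exact (Reachable.symm ((h.mono hDle).trans hkey))
    · exact (h.mono hDle).symm
  have hT'edge : T'.edgeSet = insert s(x, y) (T.edgeSet \ {s(u, v)}) := by
    rw [hT'def, SimpleGraph.edgeSet_fromEdgeSet]
    refine Set.Subset.antisymm Set.diff_subset fun q hq => ⟨hq, ?_⟩
    intro hdiag
    rcases Set.mem_insert_iff.mp hq with rfl | ⟨hqT, _⟩
    · exact hxy (Sym2.mk_isDiag_iff.mp hdiag)
    · exact SimpleGraph.not_isDiag_of_mem_edgeSet T hqT hdiag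
  have hacy : T'.IsAcyclic := by
    rw [SimpleGraph.isAcyclic_iff_forall_edge_isBridge]
    intro q hq
    rw [hT'edge] at hq
    revert hq
    induction q using Sym2.inductionOn with
    | _ p r =>
      intro hq
      have hpr : p ≠ r := by
        rintro rfl
        rcases hq with ha | ⟨hqT, _⟩
        · rw [Sym2.eq_iff] at ha
          rcases ha with ⟨rfl, rfl⟩ | ⟨rfl, rfl⟩ <;> exact hxy rfl
        · exact SimpleGraph.not_isDiag_of_mem_edgeSet T hqT (Sym2.mk_isDiag_iff.mpr rfl)
      rw [SimpleGraph.isBridge_iff]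
      suffices hsuff : T'.Adj p r ∧ ¬(T'.deleteEdges {s(p, r)}).Reachable p r from hsuff.2
      constructor
      · rw [hT'def, SimpleGraph.fromEdgeSet_adj]; exact ⟨hq, hpr⟩
      · intro hreach
        rcases hq with ha | ⟨hqT, hqnt⟩
        · -- the new edge is a bridge in `T'`
          have hmono : (T' \ SimpleGraph.fromEdgeSet {s(p, r)}) ≤ T.deleteEdges {s(u, v)} := by
            intro p' q' hpq'
            rw [SimpleGraph.sdiff_adj] at hpq'
            obtain ⟨hpq1, hpq2⟩ := hpq'
            rw [hT'def, SimpleGraph.fromEdgeSet_adj] at hpq1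
            obtain ⟨hmem, hne⟩ := hpq1
            rcases hmem with heq | ⟨hTm, hnt⟩
            · exfalso
              apply hpq2
              rw [SimpleGraph.fromEdgeSet_adj]
              exact ⟨by rw [Set.mem_singleton_iff, heq, ha], hne⟩
            · rw [SimpleGraph.deleteEdges_adj]
              exact ⟨(SimpleGraph.mem_edgeSet _).mp hTm, by simpa using hnt⟩
          have hDr := hreach.mono hmono
          rw [Sym2.eq_iff] at ha
          rcases ha with ⟨rfl, rfl⟩ | ⟨rfl, rfl⟩
          · exact hnr hDr
          · exact hnr hDr.symm
        · -- an old edge of `T` is a bridge in `T'`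
          have hqXne : s(p, r) ≠ s(u, v) := by simpa using hqnt
          have hbr : ¬(T.deleteEdges {s(p, r)}).Reachable p r := by
            have hb := SimpleGraph.isAcyclic_iff_forall_edge_isBridge.mp hTr.IsAcyclic hqT
            exact SimpleGraph.isBridge_iff.mp hb
          have hle2 : ∀ p' q', (T' \ SimpleGraph.fromEdgeSet {s(p, r)}).Adj p' q' →
              ((T.deleteEdges {s(u, v)}).deleteEdges {s(p, r)}).Adj p' q' ∨
                (p' = x ∧ q' = y) ∨ (p' = y ∧ q' = x) := by
            intro p' q' hpq'
            rw [SimpleGraph.sdiff_adj] at hpq'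
            obtain ⟨hpq1, hpq2⟩ := hpq'
            rw [hT'def, SimpleGraph.fromEdgeSet_adj] at hpq1
            obtain ⟨hmem, hne⟩ := hpq1
            rcases hmem with heq | ⟨hTm, hnt⟩
            · rw [Sym2.eq_iff] at heq; tauto
            · left
              rw [SimpleGraph.deleteEdges_adj, SimpleGraph.deleteEdges_adj]
              refine ⟨⟨(SimpleGraph.mem_edgeSet _).mp hTm, by simpa using hnt⟩, ?_⟩
              intro hc
              apply hpq2
              rw [SimpleGraph.fromEdgeSet_adj]
              exact ⟨hc, hne⟩
          have hmono1 : ((T.deleteEdges {s(u, v)}).deleteEdges {s(p, r)}) ≤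
              T.deleteEdges {s(p, r)} := by
            intro p' q' hpq'
            rw [SimpleGraph.deleteEdges_adj] at hpq' ⊢
            rw [SimpleGraph.deleteEdges_adj] at hpq'
            exact ⟨hpq'.1.1, hpq'.2⟩
          have hmono2 : ((T.deleteEdges {s(u, v)}).deleteEdges {s(p, r)}) ≤
              T.deleteEdges {s(u, v)} := by
            intro p' q' hpq'
            rw [SimpleGraph.deleteEdges_adj] at hpq'
            exact hpq'.1
          have hprD : (T.deleteEdges {s(u, v)}).Adj p r := by
            rw [SimpleGraph.deleteEdges_adj]
            exact ⟨(SimpleGraph.mem_edgeSet _).mp hqT, by simpa using hqXne⟩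
          rcases reach_cases hle2 hreach with h | ⟨h1, h2⟩ | ⟨h1, h2⟩
          · exact hbr (h.mono hmono1)
          · exact hnr ((h1.mono hmono2).symm.trans
              (hprD.reachable.trans (h2.mono hmono2).symm))
          · exact hnr ((h2.mono hmono2).trans
              (hprD.symm.reachable.trans (h1.mono hmono2)))
  exact ⟨hconn', hacy⟩

/-- Neighbourhood of the deleted edge's endpoint `v` after the swap. -/
lemma swap_nbhd_v {T : SimpleGraph W} {u v x y : W} (hvx : v ≠ x) (hvy : v ≠ y) :
    (SimpleGraph.fromEdgeSet (insert s(x, y) (T.edgeSet \ {s(u, v)}))).neighborSet v =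
      T.neighborSet v \ {u} := by
  ext z
  simp only [SimpleGraph.mem_neighborSet, SimpleGraph.fromEdgeSet_adj, Set.mem_insert_iff,
    Set.mem_diff, Set.mem_singleton_iff]
  constructor
  · rintro ⟨ha | ⟨hmem, hnt⟩, hne⟩
    · rw [Sym2.eq_iff] at ha
      rcases ha with ⟨h1, _⟩ | ⟨h1, _⟩
      · exact absurd h1 hvx
      · exact absurd h1 hvy
    · refine ⟨(SimpleGraph.mem_edgeSet _).mp hmem, ?_⟩
      rintro rfl
      exact hnt (Sym2.eq_swap)
  · rintro ⟨hadjz, hzu⟩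
    refine ⟨Or.inr ⟨(SimpleGraph.mem_edgeSet _).mpr hadjz, ?_⟩, hadjz.ne⟩
    intro hc
    rw [Sym2.eq_iff] at hc
    rcases hc with ⟨h1, h2⟩ | ⟨h1, h2⟩
    · exact hadjz.ne h2.symm
    · exact hzu h2

/-- Neighbourhood of the new edge's endpoint `y` after the swap. -/
lemma swap_nbhd_y {T : SimpleGraph W} {u v x y : W} (hyu : y ≠ u) (hyv : y ≠ v) (hxy : x ≠ y) :
    (SimpleGraph.fromEdgeSet (insert s(x, y) (T.edgeSet \ {s(u, v)}))).neighborSet y =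
      insert x (T.neighborSet y) := by
  ext z
  simp only [SimpleGraph.mem_neighborSet, SimpleGraph.fromEdgeSet_adj, Set.mem_insert_iff,
    Set.mem_diff, Set.mem_singleton_iff]
  constructor
  · rintro ⟨ha | ⟨hmem, _⟩, hne⟩
    · rw [Sym2.eq_iff] at ha
      rcases ha with ⟨h1, _⟩ | ⟨_, h2⟩
      · exact absurd h1.symm hxy
      · exact Or.inl h2
    · exact Or.inr ((SimpleGraph.mem_edgeSet _).mp hmem)
  · rintro (rfl | hadjz)
    · exact ⟨Or.inl Sym2.eq_swap, Ne.symm hxy⟩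
    · refine ⟨Or.inr ⟨(SimpleGraph.mem_edgeSet _).mpr hadjz, ?_⟩, hadjz.ne⟩
      rw [Sym2.eq_iff]
      rintro (⟨h1, _⟩ | ⟨h1, _⟩)
      · exact hyu h1
      · exact hyv h1

/-- Neighbourhoods of vertices not involved in the swap are unchanged. -/
lemma swap_nbhd_other {T : SimpleGraph W} {u v x y p : W} (hpu : p ≠ u) (hpv : p ≠ v)
    (hpx : p ≠ x) (hpy : p ≠ y) :
    (SimpleGraph.fromEdgeSet (insert s(x, y) (T.edgeSet \ {s(u, v)}))).neighborSet p =
      T.neighborSet p := by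
  ext z
  simp only [SimpleGraph.mem_neighborSet, SimpleGraph.fromEdgeSet_adj, Set.mem_insert_iff,
    Set.mem_diff, Set.mem_singleton_iff]
  constructor
  · rintro ⟨ha | ⟨hmem, _⟩, hne⟩
    · rw [Sym2.eq_iff] at ha
      rcases ha with ⟨h1, _⟩ | ⟨h1, _⟩
      · exact absurd h1 hpx
      · exact absurd h1 hpy
    · exact (SimpleGraph.mem_edgeSet _).mp hmem
  · intro hadjz
    refine ⟨Or.inr ⟨(SimpleGraph.mem_edgeSet _).mpr hadjz, ?_⟩, hadjz.ne⟩
    rw [Sym2.eq_iff]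
    rintro (⟨h1, _⟩ | ⟨h1, _⟩)
    · exact hpu h1
    · exact hpv h1

end AuxGraph

section SwapHypertree

lemma HGraph.bip_adj_mk (H : HGraph α β) {v : ↥H.V} {b : ↥H.E}
    (hvb : (v : α) ∈ H.incid (b : β)) : H.Bip.Adj (Sum.inl v) (Sum.inr b) := by
  rw [HGraph.Bip, SimpleGraph.fromRel_adj]
  exact ⟨by simp, Or.inl ⟨v, b, rfl, rfl, hvb⟩⟩

lemma HGraph.bip_adj_inr (H : HGraph α β) {z : ↥H.V ⊕ ↥H.E} {b : ↥H.E}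
    (h : H.Bip.Adj z (Sum.inr b)) : ∃ v : ↥H.V, z = Sum.inl v ∧ (v : α) ∈ H.incid (b : β) := by
  rw [HGraph.Bip, SimpleGraph.fromRel_adj] at h
  obtain ⟨hne, h | h⟩ := h
  · obtain ⟨v, e', h1, h2, h3⟩ := h
    exact ⟨v, h1, by rwa [← Sum.inr.inj h2] at h3⟩
  · obtain ⟨v, e', h1, h2, h3⟩ := h
    exact absurd h1 (by simp)

/-- The fundamental swap: remove an edge at `ee` of a tree realizing `f`, reattach across
the cut at a hyperedge `b`; this realizes the transfer from `ee` to `b`. -/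
lemma swap_hypertree (H : HGraph α β) {T : SimpleGraph (↥H.V ⊕ ↥H.E)} {f : β → ℕ}
    (hT : H.Realizes T f) (u : ↥H.V) (ee : ↥H.E)
    (hadj : T.Adj (Sum.inl u) (Sum.inr ee)) {b : β} (hbE : b ∈ H.E) (hbne : b ≠ (ee : β))
    {w : α} (hw : w ∈ H.incid b) (hfe : 0 < f (ee : β))
    (hnr : ¬(T.deleteEdges {s(Sum.inl u, Sum.inr ee)}).Reachable
      (Sum.inl ⟨w, H.incid_sub b hbE hw⟩) (Sum.inr ⟨b, hbE⟩)) :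
    H.IsHypertree (transferFun f (ee : β) b) := by
  classical
  obtain ⟨⟨hTB, hTr⟩, hzero, hdeg⟩ := hT
  have hbee : (⟨b, hbE⟩ : ↥H.E) ≠ ee := fun h => hbne (congrArg Subtype.val h)
  have hxy : (Sum.inl (⟨w, H.incid_sub b hbE hw⟩ : ↥H.V) : ↥H.V ⊕ ↥H.E)
      ≠ Sum.inr (⟨b, hbE⟩ : ↥H.E) := by simp
  have hst : s((Sum.inl (⟨w, H.incid_sub b hbE hw⟩ : ↥H.V) : ↥H.V ⊕ ↥H.E),
      Sum.inr (⟨b, hbE⟩ : ↥H.E)) ≠ s(Sum.inl u, Sum.inr ee) := by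
    intro hc
    rw [Sym2.eq_iff] at hc
    rcases hc with ⟨h1, h2⟩ | ⟨h1, h2⟩
    · exact hbee (Sum.inr.inj h2)
    · simp at h1
  refine ⟨SimpleGraph.fromEdgeSet (insert s((Sum.inl (⟨w, H.incid_sub b hbE hw⟩ : ↥H.V) :
      ↥H.V ⊕ ↥H.E), Sum.inr (⟨b, hbE⟩ : ↥H.E)) (T.edgeSet \ {s(Sum.inl u, Sum.inr ee)})),
      ⟨?_, ?_⟩, ?_, ?_⟩
  · -- the swapped graph is a subgraph of `Bip`
    intro p q hpq
    rw [SimpleGraph.fromEdgeSet_adj] at hpq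
    obtain ⟨hmem, hne⟩ := hpq
    rcases Set.mem_insert_iff.mp hmem with heq | ⟨hTm, _⟩
    · rw [Sym2.eq_iff] at heq
      rcases heq with ⟨rfl, rfl⟩ | ⟨rfl, rfl⟩
      · exact H.bip_adj_mk hw
      · exact (H.bip_adj_mk hw).symm
    · exact hTB ((SimpleGraph.mem_edgeSet _).mp hTm)
  · exact swap_isTree hTr hadj hxy hst hnr
  · -- vanishing off `E`
    intro x hx
    have hxe : x ≠ (ee : β) := fun h => hx (h ▸ ee.2)
    have hxb : x ≠ b := fun h => hx (h ▸ hbE)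
    simp only [transferFun, if_neg hxe, if_neg hxb]
    exact hzero x hx
  · -- degrees
    intro x
    by_cases hx1 : x = ee
    · subst hx1
      have hvx : (Sum.inr x : ↥H.V ⊕ ↥H.E) ≠ Sum.inl (⟨w, H.incid_sub b hbE hw⟩ : ↥H.V) := by
        simp
      have hvy : (Sum.inr x : ↥H.V ⊕ ↥H.E) ≠ Sum.inr (⟨b, hbE⟩ : ↥H.E) :=
        fun h => hbee (Sum.inr.inj h).symm
      have hmem : (Sum.inl u : ↥H.V ⊕ ↥H.E) ∈ T.neighborSet (Sum.inr x) := hadj.symm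
      have hd := hdeg x
      simp only [degr] at hd ⊢
      rw [swap_nbhd_v hvx hvy, Set.ncard_diff_singleton_of_mem hmem, hd]
      simp [transferFun]
      omega
    · by_cases hx2 : x = (⟨b, hbE⟩ : ↥H.E)
      · rw [hx2]
        have hyu : (Sum.inr (⟨b, hbE⟩ : ↥H.E) : ↥H.V ⊕ ↥H.E) ≠ Sum.inl u := by simp
        have hyv : (Sum.inr (⟨b, hbE⟩ : ↥H.E) : ↥H.V ⊕ ↥H.E) ≠ Sum.inr ee :=
          fun h => hbee (Sum.inr.inj h)
        have hnm : (Sum.inl (⟨w, H.incid_sub b hbE hw⟩ : ↥H.V) : ↥H.V ⊕ ↥H.E)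
            ∉ T.neighborSet (Sum.inr (⟨b, hbE⟩ : ↥H.E)) := by
          intro hm
          apply hnr
          apply SimpleGraph.Adj.reachable
          rw [SimpleGraph.deleteEdges_adj]
          exact ⟨(hm : T.Adj _ _).symm, by simpa using hst⟩
        have hd := hdeg ⟨b, hbE⟩
        simp only [degr] at hd ⊢
        rw [swap_nbhd_y hyu hyv hxy, Set.ncard_insert_of_notMem hnm, hd]
        simp [transferFun, if_neg hbne]
      · have hpu : (Sum.inr x : ↥H.V ⊕ ↥H.E) ≠ Sum.inl u := by simp
        have hpv : (Sum.inr x : ↥H.V ⊕ ↥H.E) ≠ Sum.inr ee := fun h => hx1 (Sum.inr.inj h)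
        have hpx : (Sum.inr x : ↥H.V ⊕ ↥H.E)
            ≠ Sum.inl (⟨w, H.incid_sub b hbE hw⟩ : ↥H.V) := by simp
        have hpy : (Sum.inr x : ↥H.V ⊕ ↥H.E) ≠ Sum.inr (⟨b, hbE⟩ : ↥H.E) :=
          fun h => hx2 (Sum.inr.inj h)
        have hd := hdeg x
        simp only [degr] at hd ⊢
        rw [swap_nbhd_other hpu hpv hpx hpy, hd]
        have hc1 : (x : β) ≠ (ee : β) := fun h => hx1 (Subtype.ext h)
        have hc2 : (x : β) ≠ b := fun h => hx2 (Subtype.ext h)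
        simp only [transferFun, if_neg hc1, if_neg hc2]

end SwapHypertree

section BipOnLemmas

/-- Adjacency constructor for `BipOn`. -/
lemma HGraph.bipOn_adj_mk (H : HGraph α β) {E' : Finset β} {v : α} {b : β}
    (hv : v ∈ E'.biUnion H.incid) (hb : b ∈ E') (hvb : v ∈ H.incid b) :
    (H.BipOn E').Adj (Sum.inl ⟨v, hv⟩) (Sum.inr ⟨b, hb⟩) := by
  rw [HGraph.BipOn, SimpleGraph.fromRel_adj]
  exact ⟨by simp, Or.inl ⟨⟨v, hv⟩, ⟨b, hb⟩, rfl, rfl, hvb⟩⟩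

/-- Edge decomposition for `BipOn`. -/
lemma HGraph.bipOn_adj_elim (H : HGraph α β) {E' : Finset β}
    {x y : ↥(E'.biUnion H.incid) ⊕ ↥E'} (h : (H.BipOn E').Adj x y) :
    ∃ (v : ↥(E'.biUnion H.incid)) (b : ↥E'), (v : α) ∈ H.incid (b : β) ∧
      ((x = Sum.inl v ∧ y = Sum.inr b) ∨ (x = Sum.inr b ∧ y = Sum.inl v)) := by
  rw [HGraph.BipOn, SimpleGraph.fromRel_adj] at h
  obtain ⟨_, h | h⟩ := h
  · obtain ⟨v, b, h1, h2, h3⟩ := h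
    exact ⟨v, b, h3, Or.inl ⟨h1, h2⟩⟩
  · obtain ⟨v, b, h1, h2, h3⟩ := h
    exact ⟨v, b, h3, Or.inr ⟨h2, h1⟩⟩

/-- The component `D` of `Bip H |_{E'}` contains a vertex of `incid e`. -/
def HGraph.meets (H : HGraph α β) (E' : Finset β) (e : β)
    (D : (H.BipOn E').ConnectedComponent) : Prop :=
  ∃ (v : α) (h : v ∈ E'.biUnion H.incid), v ∈ H.incid e ∧
    (H.BipOn E').connectedComponentMk (Sum.inl ⟨v, h⟩) = D

/-- The number of components of `Bip H |_{E'}` meeting `incid e`. -/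
noncomputable def HGraph.rcount (H : HGraph α β) (E' : Finset β) (e : β) : ℕ :=
  Nat.card {D : (H.BipOn E').ConnectedComponent // H.meets E' e D}

lemma HGraph.bipOn_reach_map (H : HGraph α β) {E1 E2 : Finset β} (hsub : E1 ⊆ E2)
    {x y : ↥(E1.biUnion H.incid) ⊕ ↥E1} (h : (H.BipOn E1).Reachable x y) :
    (H.BipOn E2).Reachable
      (Sum.map (fun v : ↥(E1.biUnion H.incid) =>
          (⟨v.1, Finset.biUnion_subset_biUnion_of_subset_left _ hsub v.2⟩ : ↥(E2.biUnion H.incid)))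
        (fun b : ↥E1 => (⟨b.1, hsub b.2⟩ : ↥E2)) x)
      (Sum.map (fun v : ↥(E1.biUnion H.incid) =>
          (⟨v.1, Finset.biUnion_subset_biUnion_of_subset_left _ hsub v.2⟩ : ↥(E2.biUnion H.incid)))
        (fun b : ↥E1 => (⟨b.1, hsub b.2⟩ : ↥E2)) y) := by
  refine SimpleGraph.Reachable.map ⟨_, ?_⟩ h
  intro p q hpq
  obtain ⟨v, bb, hm, hc⟩ := H.bipOn_adj_elim hpq
  rcases hc with ⟨rfl, rfl⟩ | ⟨rfl, rfl⟩
  · exact H.bipOn_adj_mk _ (hsub bb.2) hm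
  · exact (H.bipOn_adj_mk _ (hsub bb.2) hm).symm

/-- Adding a hyperedge can kill at most the components its vertices meet, and creates
one new component (the one of `e`). -/
lemma HGraph.comp_count_le (H : HGraph α β) {Lt : Finset β} {e : β} (heE : e ∈ H.E) :
    Nat.card (H.BipOn (insert e Lt)).ConnectedComponent + H.rcount Lt e ≤
      Nat.card (H.BipOn Lt).ConnectedComponent + 1 := by
  classical
  have heLe : e ∈ insert e Lt := Finset.mem_insert_self e Lt
  have hsub : Lt ⊆ insert e Lt := Finset.subset_insert e Lt
  set c0 : (H.BipOn (insert e Lt)).ConnectedComponent :=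
    (H.BipOn (insert e Lt)).connectedComponentMk (Sum.inr ⟨e, heLe⟩) with hc0
  have exb : ∀ C : (H.BipOn (insert e Lt)).ConnectedComponent, C ≠ c0 →
      ∃ (bv : β) (hb : bv ∈ Lt),
        (H.BipOn (insert e Lt)).connectedComponentMk (Sum.inr ⟨bv, hsub hb⟩) = C := by
    intro C hC
    obtain ⟨z, hz⟩ := C.exists_rep
    rcases z with vv | bb
    · by_cases hvb : ∃ b0 ∈ Lt, (vv : α) ∈ H.incid b0
      · obtain ⟨b0, hb0, hvb0⟩ := hvb
        refine ⟨b0, hb0, ?_⟩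
        have hadj := H.bipOn_adj_mk vv.2 (hsub hb0) hvb0
        exact ((SimpleGraph.ConnectedComponent.connectedComponentMk_eq_of_adj hadj).symm).trans hz
      · exfalso
        obtain ⟨b0, hb0Le, hvb0⟩ := Finset.mem_biUnion.mp vv.2
        rcases Finset.mem_insert.mp hb0Le with rfl | hb0Lt
        · have hadj := H.bipOn_adj_mk vv.2 heLe hvb0
          apply hC
          rw [← hz, hc0]
          exact SimpleGraph.ConnectedComponent.connectedComponentMk_eq_of_adj hadj
        · exact hvb ⟨b0, hb0Lt, hvb0⟩
    · rcases Finset.mem_insert.mp bb.2 with hbe | hbLt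
      · exfalso
        apply hC
        rw [← hz, hc0]
        exact congrArg _ (congrArg Sum.inr (Subtype.ext hbe : bb = ⟨e, heLe⟩))
      · exact ⟨bb.1, hbLt, hz⟩
  choose bv hbv hmk using exb
  have hFdef : ∀ C : {C : (H.BipOn (insert e Lt)).ConnectedComponent // C ≠ c0},
      ¬ H.meets Lt e ((H.BipOn Lt).connectedComponentMk
        (Sum.inr ⟨bv C.1 C.2, hbv C.1 C.2⟩)) := by
    rintro C ⟨v, hvU, hvincid, hmkD⟩
    have hr := (SimpleGraph.ConnectedComponent.eq).mp hmkD
    have hrLe := H.bipOn_reach_map hsub hr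
    have hadj : (H.BipOn (insert e Lt)).Adj
        (Sum.inl ⟨v, Finset.biUnion_subset_biUnion_of_subset_left _ hsub hvU⟩)
        (Sum.inr ⟨e, heLe⟩) :=
      H.bipOn_adj_mk _ heLe hvincid
    exact C.2 ((hmk C.1 C.2).symm.trans
      (((SimpleGraph.ConnectedComponent.eq.mpr hrLe.symm).trans
        (SimpleGraph.ConnectedComponent.connectedComponentMk_eq_of_adj hadj)).trans hc0.symm))
  -- big injection
  set J : ({D : (H.BipOn Lt).ConnectedComponent // H.meets Lt e D} ⊕
      {C : (H.BipOn (insert e Lt)).ConnectedComponent // C ≠ c0}) →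
      (H.BipOn Lt).ConnectedComponent :=
    Sum.elim (fun D => D.1)
      (fun C => (H.BipOn Lt).connectedComponentMk (Sum.inr ⟨bv C.1 C.2, hbv C.1 C.2⟩)) with hJ
  have hJinj : Function.Injective J := by
    rintro (D1 | C1) (D2 | C2) heq <;> rw [hJ] at heq <;> simp only [Sum.elim_inl, Sum.elim_inr] at heq
    · rw [Sum.inl.injEq]
      exact Subtype.ext heq
    · exact absurd (heq ▸ D1.2) (hFdef C2)
    · exact absurd (heq.symm ▸ D2.2) (hFdef C1)
    · rw [Sum.inr.injEq]
      have hr := (SimpleGraph.ConnectedComponent.eq).mp heq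
      have hrLe := H.bipOn_reach_map hsub hr
      exact Subtype.ext ((hmk C1.1 C1.2).symm.trans
        ((SimpleGraph.ConnectedComponent.eq.mpr hrLe).trans (hmk C2.1 C2.2)))
  have hJcard := Nat.card_le_card_of_injective J hJinj
  rw [Nat.card_sum] at hJcard
  -- compLe ≤ |{C ≠ c0}| + 1
  set K : (H.BipOn (insert e Lt)).ConnectedComponent →
      ({C : (H.BipOn (insert e Lt)).ConnectedComponent // C ≠ c0} ⊕ Unit) :=
    fun C => if h : C = c0 then Sum.inr () else Sum.inl ⟨C, h⟩ with hK
  have hKinj : Function.Injective K := by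
    intro C1 C2 heq
    simp only [hK] at heq
    by_cases h1 : C1 = c0 <;> by_cases h2 : C2 = c0
    · exact h1.trans h2.symm
    · rw [dif_pos h1, dif_neg h2] at heq
      exact absurd heq (by simp)
    · rw [dif_neg h1, dif_pos h2] at heq
      exact absurd heq (by simp)
    · rw [dif_neg h1, dif_neg h2] at heq
      exact congrArg Subtype.val (Sum.inl.inj heq)
  have hKcard := Nat.card_le_card_of_injective K hKinj
  rw [Nat.card_sum] at hKcard
  have hunit : Nat.card Unit = 1 := Nat.card_unique
  rw [HGraph.rcount]
  omega

/-- Edge representation for `BipOn`. -/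
lemma HGraph.bipOn_edge_rep (H : HGraph α β) {E' : Finset β}
    {q : Sym2 (↥(E'.biUnion H.incid) ⊕ ↥E')} (hq : q ∈ (H.BipOn E').edgeSet) :
    ∃ (v : ↥(E'.biUnion H.incid)) (b : ↥E'), (v : α) ∈ H.incid (b : β) ∧
      q = s(Sum.inl v, Sum.inr b) := by
  revert hq
  induction q using Sym2.inductionOn with
  | _ x y =>
    intro hq
    obtain ⟨v, b, hm, hc⟩ := H.bipOn_adj_elim ((SimpleGraph.mem_edgeSet _).mp hq)
    rcases hc with ⟨rfl, rfl⟩ | ⟨rfl, rfl⟩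
    · exact ⟨v, b, hm, rfl⟩
    · exact ⟨v, b, hm, Sym2.eq_swap⟩

/-- Adding the hyperedge `e` adds at most `|incid e|` edges to the bipartite graph. -/
lemma HGraph.edge_count_le (H : HGraph α β) {Lt : Finset β} {e : β} (heLt : e ∉ Lt) :
    (H.BipOn (insert e Lt)).edgeSet.ncard ≤ (H.BipOn Lt).edgeSet.ncard + (H.incid e).card := by
  classical
  have hsub : Lt ⊆ insert e Lt := Finset.subset_insert e Lt
  have hrep := fun (q : (H.BipOn (insert e Lt)).edgeSet) => H.bipOn_edge_rep q.2
  choose v b hm hq using hrep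
  set F : (H.BipOn (insert e Lt)).edgeSet →
      ((H.BipOn Lt).edgeSet ⊕ ↥(H.incid e)) := fun q =>
    if hbe : (b q : β) = e then Sum.inr ⟨(v q : α), by have h := hm q; rwa [hbe] at h⟩
    else
      Sum.inl ⟨s(Sum.inl ⟨(v q : α), Finset.mem_biUnion.mpr
          ⟨(b q : β), Or.resolve_left (Finset.mem_insert.mp (b q).2) hbe, hm q⟩⟩,
        Sum.inr ⟨(b q : β), Or.resolve_left (Finset.mem_insert.mp (b q).2) hbe⟩),
        (SimpleGraph.mem_edgeSet _).mpr (H.bipOn_adj_mk _ _ (hm q))⟩ with hFdef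
  have hFinj : Function.Injective F := by
    intro q1 q2 heq
    simp only [hFdef] at heq
    by_cases h1 : (b q1 : β) = e <;> by_cases h2 : (b q2 : β) = e
    · rw [dif_pos h1, dif_pos h2] at heq
      have heq' := Sum.inr.inj heq
      have hv : (v q1 : α) = (v q2 : α) :=
        congrArg (fun z : ↥(H.incid e) => (z : α)) heq'
      apply Subtype.ext
      rw [hq q1, hq q2]
      have hb : b q1 = b q2 := Subtype.ext (h1.trans h2.symm)
      rw [Subtype.ext hv, hb]
    · rw [dif_pos h1, dif_neg h2] at heq
      exact absurd heq (by simp)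
    · rw [dif_neg h1, dif_pos h2] at heq
      exact absurd heq (by simp)
    · rw [dif_neg h1, dif_neg h2] at heq
      have hval := congrArg Subtype.val (Sum.inl.inj heq)
      rw [Sym2.eq_iff] at hval
      rcases hval with ⟨hA, hB⟩ | ⟨hA, hB⟩
      · have hA' := Sum.inl.inj hA
        have hB' := Sum.inr.inj hB
        have hv : (v q1 : α) = (v q2 : α) :=
          congrArg (fun z : ↥(Lt.biUnion H.incid) => (z : α)) hA'
        have hb : (b q1 : β) = (b q2 : β) := congrArg (fun z : ↥Lt => (z : β)) hB'
        apply Subtype.ext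
        rw [hq q1, hq q2, Subtype.ext hv, Subtype.ext hb]
      · exact absurd hA (by simp)
  have hle := Nat.card_le_card_of_injective F hFinj
  rw [Nat.card_sum] at hle
  have h1 := Nat.card_coe_set_eq (H.BipOn (insert e Lt)).edgeSet
  have h2 := Nat.card_coe_set_eq (H.BipOn Lt).edgeSet
  have h3 := Nat.card_eq_finsetCard (H.incid e)
  omega

/-- Vertex count of `BipOn (insert e Lt)`. -/
lemma HGraph.vert_count (H : HGraph α β) {Lt : Finset β} {e : β} (heLt : e ∉ Lt) :
    Nat.card (↥((insert e Lt).biUnion H.incid) ⊕ ↥(insert e Lt)) =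
      Nat.card (↥(Lt.biUnion H.incid) ⊕ ↥Lt)
        + (H.incid e \ Lt.biUnion H.incid).card + 1 := by
  classical
  rw [Nat.card_sum, Nat.card_sum, Nat.card_eq_finsetCard, Nat.card_eq_finsetCard,
    Nat.card_eq_finsetCard, Nat.card_eq_finsetCard]
  have h1 : (insert e Lt).card = Lt.card + 1 := Finset.card_insert_of_notMem heLt
  have h2 : (insert e Lt).biUnion H.incid = Lt.biUnion H.incid ∪ H.incid e := by
    rw [Finset.biUnion_insert]
    exact Finset.union_comm _ _
  have h3 : (Lt.biUnion H.incid ∪ H.incid e).card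
      = (Lt.biUnion H.incid).card + (H.incid e \ Lt.biUnion H.incid).card := by
    rw [← Finset.union_sdiff_self_eq_union]
    exact Finset.card_union_of_disjoint Finset.disjoint_sdiff
  rw [h1, h2, h3]
  omega

/-- Components meeting `incid e` are counted by vertices in `incid e ∩ ∪Lt`. -/
lemma HGraph.rcount_le (H : HGraph α β) (Lt : Finset β) (e : β) :
    H.rcount Lt e ≤ (H.incid e ∩ Lt.biUnion H.incid).card := by
  classical
  have hrep : ∀ D : {D : (H.BipOn Lt).ConnectedComponent // H.meets Lt e D},
      ∃ (v : α) (h1 : v ∈ Lt.biUnion H.incid), v ∈ H.incid e ∧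
        (H.BipOn Lt).connectedComponentMk (Sum.inl ⟨v, h1⟩) = D.1 := fun D => D.2
  choose wv h1 h2 h3 using hrep
  set G : {D : (H.BipOn Lt).ConnectedComponent // H.meets Lt e D}
      → ↥(H.incid e ∩ Lt.biUnion H.incid) :=
    fun D => ⟨wv D, Finset.mem_inter.mpr ⟨h2 D, h1 D⟩⟩ with hGdef
  have hGInj : Function.Injective G := by
    intro D1 D2 heq
    rw [hGdef] at heq
    have hval : wv D1 = wv D2 := congrArg Subtype.val heq
    apply Subtype.ext
    have hsubx : (⟨wv D1, h1 D1⟩ : ↥(Lt.biUnion H.incid)) = ⟨wv D2, h1 D2⟩ := Subtype.ext hval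
    rw [← h3 D1, ← h3 D2, hsubx]
  have hle := Nat.card_le_card_of_injective G hGInj
  rwa [Nat.card_eq_finsetCard] at hle

end BipOnLemmas

/-- if a hypertree exceeds the greedy hypertree at `e`, then a transfer
of valence is possible from `e` to some smaller hyperedge. -/
theorem transfer_below_greedy (H : HGraph α β) (hconn : H.Bip.Connected)
    (o : LinearOrder β) (f : β → ℕ) (hf : H.IsHypertree f)
    (e : β) (he : e ∈ H.E) (hgt : H.greedy o e < f e) :
    ∃ x ∈ H.E, o.lt x e ∧ H.TransferPossible f e x := by
  classical
  letI : LinearOrder β := o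
  by_contra hno
  push_neg at hno
  have hfe : 0 < f e := lt_of_le_of_lt (Nat.zero_le _) hgt
  obtain ⟨T, hT⟩ := hf
  have hTB : T ≤ H.Bip := hT.1.1
  have hTr : T.IsTree := hT.1.2
  have hdeg := hT.2.2
  set Lt := H.downSetLt o e with hLtdef
  have hLtE : Lt ⊆ H.E := Finset.filter_subset _ _
  have heLt : e ∉ Lt := by
    intro hc
    exact absurd (Finset.mem_filter.mp hc).2 (lt_irrefl e)
  have hLe : H.downSetLe o e = insert e Lt := by
    ext x
    rw [HGraph.downSetLe, hLtdef, HGraph.downSetLt, Finset.mem_insert,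
      Finset.mem_filter, Finset.mem_filter]
    constructor
    · rintro ⟨hxE, hxle⟩
      rcases eq_or_ne x e with rfl | hne
      · exact Or.inl rfl
      · exact Or.inr ⟨hxE, lt_of_le_of_ne hxle hne⟩
    · rintro (rfl | ⟨hxE, hxlt⟩)
      · exact ⟨he, le_refl x⟩
      · exact ⟨hxE, le_of_lt hxlt⟩
  have hUV : Lt.biUnion H.incid ⊆ H.V := by
    intro v hv
    obtain ⟨bb, hb, hvb⟩ := Finset.mem_biUnion.mp hv
    exact H.incid_sub bb (hLtE hb) hvb
  -- the star of every hyperedge below `e` stays on one side of every cut at `e`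
  have hstar : ∀ u : ↥H.V, T.Adj (Sum.inl u) (Sum.inr ⟨e, he⟩) →
      ∀ (bb : β) (hb : bb ∈ Lt) (w' : α) (hw' : w' ∈ H.incid bb),
      (T.deleteEdges {s(Sum.inl u, Sum.inr (⟨e, he⟩ : ↥H.E))}).Reachable
        (Sum.inl ⟨w', H.incid_sub bb (hLtE hb) hw'⟩) (Sum.inr ⟨bb, hLtE hb⟩) := by
    intro u hu bb hb w' hw'
    by_contra hnr
    have hbblt : o.lt bb e := (Finset.mem_filter.mp hb).2
    have hbbne : bb ≠ e := ne_of_lt hbblt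
    exact hno bb (hLtE hb) hbblt
      ⟨hfe, swap_hypertree H hT u ⟨e, he⟩ hu (hLtE hb) hbbne hw' hfe hnr⟩
  -- transport of reachability in `BipOn Lt` into the cut graph
  have htrans : ∀ u : ↥H.V, T.Adj (Sum.inl u) (Sum.inr ⟨e, he⟩) →
      ∀ x y : (↥(Lt.biUnion H.incid) ⊕ ↥Lt), (H.BipOn Lt).Reachable x y →
      (T.deleteEdges {s(Sum.inl u, Sum.inr (⟨e, he⟩ : ↥H.E))}).Reachable
        (Sum.map (fun v : ↥(Lt.biUnion H.incid) => (⟨v.1, hUV v.2⟩ : ↥H.V))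
          (fun bb : ↥Lt => (⟨bb.1, hLtE bb.2⟩ : ↥H.E)) x)
        (Sum.map (fun v : ↥(Lt.biUnion H.incid) => (⟨v.1, hUV v.2⟩ : ↥H.V))
          (fun bb : ↥Lt => (⟨bb.1, hLtE bb.2⟩ : ↥H.E)) y) := by
    intro u hu x y hr
    obtain ⟨p⟩ := hr
    induction p with
    | nil => exact SimpleGraph.Reachable.refl _
    | @cons a a' a'' hadj p ih =>
      refine SimpleGraph.Reachable.trans ?_ ih
      obtain ⟨v, bb, hm, hc⟩ := H.bipOn_adj_elim hadj
      rcases hc with ⟨rfl, rfl⟩ | ⟨rfl, rfl⟩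
      · exact hstar u hu bb.1 bb.2 v.1 hm
      · exact (hstar u hu bb.1 bb.2 v.1 hm).symm
  -- the neighbours of `e` in `T`
  have hdegE : (T.neighborSet (Sum.inr (⟨e, he⟩ : ↥H.E))).ncard = f e + 1 := hdeg ⟨e, he⟩
  have hform : ∀ z : ↥(T.neighborSet (Sum.inr (⟨e, he⟩ : ↥H.E))),
      ∃ v : ↥H.V, (z : ↥H.V ⊕ ↥H.E) = Sum.inl v ∧ (v : α) ∈ H.incid e :=
    fun z => H.bip_adj_inr ((hTB z.2).symm)
  choose nb hnb1 hnb2 using hform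
  set Φ : ↥(T.neighborSet (Sum.inr (⟨e, he⟩ : ↥H.E))) →
      (↥(H.incid e \ Lt.biUnion H.incid) ⊕
        {D : (H.BipOn Lt).ConnectedComponent // H.meets Lt e D}) := fun z =>
    if hvU : ((nb z : ↥H.V) : α) ∈ Lt.biUnion H.incid
    then Sum.inr ⟨(H.BipOn Lt).connectedComponentMk (Sum.inl ⟨((nb z : ↥H.V) : α), hvU⟩),
      ⟨_, hvU, hnb2 z, rfl⟩⟩
    else Sum.inl ⟨((nb z : ↥H.V) : α), Finset.mem_sdiff.mpr ⟨hnb2 z, hvU⟩⟩ with hPhi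
  have hΦinj : Function.Injective Φ := by
    intro z1 z2 heq
    simp only [hPhi] at heq
    by_cases h1 : ((nb z1 : ↥H.V) : α) ∈ Lt.biUnion H.incid <;>
      by_cases h2 : ((nb z2 : ↥H.V) : α) ∈ Lt.biUnion H.incid
    · rw [dif_pos h1, dif_pos h2] at heq
      have heq' := Sum.inr.inj heq
      have hD : (H.BipOn Lt).connectedComponentMk (Sum.inl ⟨((nb z1 : ↥H.V) : α), h1⟩) =
          (H.BipOn Lt).connectedComponentMk (Sum.inl ⟨((nb z2 : ↥H.V) : α), h2⟩) :=
        congrArg Subtype.val heq'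
      by_contra hne
      have hnbne : nb z1 ≠ nb z2 := by
        intro hc
        apply hne
        apply Subtype.ext
        rw [hnb1 z1, hnb1 z2, hc]
      have hadj1 : T.Adj (Sum.inl (nb z1)) (Sum.inr (⟨e, he⟩ : ↥H.E)) := by
        have h := z1.2
        rw [SimpleGraph.mem_neighborSet, hnb1 z1] at h
        exact h.symm
      have hadj2 : T.Adj (Sum.inl (nb z2)) (Sum.inr (⟨e, he⟩ : ↥H.E)) := by
        have h := z2.2
        rw [SimpleGraph.mem_neighborSet, hnb1 z2] at h
        exact h.symm
      have hreach := (SimpleGraph.ConnectedComponent.eq).mp hD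
      have hR := htrans (nb z1) hadj1 _ _ hreach
      have hedge2 : (T.deleteEdges {s(Sum.inl (nb z1), Sum.inr (⟨e, he⟩ : ↥H.E))}).Adj
          (Sum.inl (nb z2)) (Sum.inr (⟨e, he⟩ : ↥H.E)) := by
        rw [SimpleGraph.deleteEdges_adj]
        refine ⟨hadj2, ?_⟩
        intro hc
        rw [Set.mem_singleton_iff, Sym2.eq_iff] at hc
        rcases hc with ⟨hA, _⟩ | ⟨hA, hB⟩
        · exact hnbne (Sum.inl.inj hA).symm
        · exact absurd hA (by simp)
      have hbr := SimpleGraph.isAcyclic_iff_forall_edge_isBridge.mp hTr.IsAcyclic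
          ((SimpleGraph.mem_edgeSet _).mpr hadj1)
      exact SimpleGraph.isBridge_iff.mp hbr (hR.trans hedge2.reachable)
    · rw [dif_pos h1, dif_neg h2] at heq
      exact absurd heq (by simp)
    · rw [dif_neg h1, dif_pos h2] at heq
      exact absurd heq (by simp)
    · rw [dif_neg h1, dif_neg h2] at heq
      have heq' := Sum.inl.inj heq
      have hv : ((nb z1 : ↥H.V) : α) = ((nb z2 : ↥H.V) : α) :=
        congrArg (fun t : ↥(H.incid e \ Lt.biUnion H.incid) => (t : α)) heq'
      apply Subtype.ext
      rw [hnb1 z1, hnb1 z2]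
      exact congrArg Sum.inl (Subtype.ext hv)
  have hΦcard := Nat.card_le_card_of_injective Φ hΦinj
  rw [Nat.card_sum] at hΦcard
  have hS1 := Nat.card_coe_set_eq (T.neighborSet (Sum.inr (⟨e, he⟩ : ↥H.E)))
  have hS2 := Nat.card_eq_finsetCard (H.incid e \ Lt.biUnion H.incid)
  have hcount : f e + 1 ≤ (H.incid e \ Lt.biUnion H.incid).card + H.rcount Lt e := by
    rw [HGraph.rcount]
    omega
  -- arithmetic assembly
  have hedge := H.edge_count_le (Lt := Lt) (e := e) heLt
  have hcomp := H.comp_count_le (Lt := Lt) (e := e) he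
  have hvert := H.vert_count (Lt := Lt) (e := e) heLt
  have hrle := H.rcount_le Lt e
  have hsplit := Finset.card_inter_add_card_sdiff (H.incid e) (Lt.biUnion H.incid)
  rw [HGraph.greedy, if_pos he, HGraph.nj, hLe, ← hLtdef] at hgt
  have hnull1 : nullity (H.BipOn (insert e Lt)) =
      (H.BipOn (insert e Lt)).edgeSet.ncard
        + Nat.card (H.BipOn (insert e Lt)).ConnectedComponent
        - Nat.card (↥((insert e Lt).biUnion H.incid) ⊕ ↥(insert e Lt)) := rfl
  have hnull2 : nullity (H.BipOn Lt) =
      (H.BipOn Lt).edgeSet.ncard + Nat.card (H.BipOn Lt).ConnectedComponent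
        - Nat.card (↥(Lt.biUnion H.incid) ⊕ ↥Lt) := rfl
  omega
end
end

section
/- Let a, b, and c be hyperedges in the hypergraph H = (V, E) (with Bip H connected) and let f be a hypertree such that a transfer of valence is possible from a to b and a transfer of valence is possible from b to c. Then f is also such that a transfer of valence is possible from a to c. -/
open SimpleGraph Finset
open scoped Classical

noncomputable section

variable {α β : Type} [DecidableEq α] [DecidableEq β]

section Aux


set_option linter.unusedSectionVars false

variable {W : Type} [Fintype W] [DecidableEq W]

lemma degr_sup_edge_fst {G : SimpleGraph W} {p q : W} (hpq : p ≠ q) (h : ¬ G.Adj p q) :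
    degr (G ⊔ fromEdgeSet {s(p, q)}) p = degr G p + 1 := by
  have hns : (G ⊔ fromEdgeSet {s(p, q)}).neighborSet p = insert q (G.neighborSet p) := by
    ext w
    simp only [mem_neighborSet, sup_adj, fromEdgeSet_adj, Set.mem_singleton_iff,
      Set.mem_insert_iff]
    constructor
    · rintro (hw | ⟨he, hne⟩)
      · exact Or.inr hw
      · rw [Sym2.eq_iff] at he
        rcases he with ⟨-, rfl⟩ | ⟨rfl, rfl⟩
        · exact Or.inl rfl
        · exact absurd rfl hne
    · rintro (rfl | hw)
      · exact Or.inr ⟨by rw [Sym2.eq_iff]; exact Or.inl ⟨rfl, rfl⟩, hpq⟩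
      · exact Or.inl hw
  have hq : q ∉ G.neighborSet p := h
  rw [degr, degr, hns]
  exact Set.ncard_insert_of_notMem hq

lemma degr_sup_edge_other {G : SimpleGraph W} {p q z : W} (hz : z ≠ p) (hz' : z ≠ q) :
    degr (G ⊔ fromEdgeSet {s(p, q)}) z = degr G z := by
  have hns : (G ⊔ fromEdgeSet {s(p, q)}).neighborSet z = G.neighborSet z := by
    ext w
    simp only [mem_neighborSet, sup_adj, fromEdgeSet_adj, Set.mem_singleton_iff]
    constructor
    · rintro (hw | ⟨he, hne⟩)
      · exact hw
      · rw [Sym2.eq_iff] at he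
        rcases he with ⟨rfl, -⟩ | ⟨rfl, -⟩
        · exact absurd rfl hz
        · exact absurd rfl hz'
    · exact fun hw => Or.inl hw
  rw [degr, degr, hns]

lemma degr_delete_edge_fst {G : SimpleGraph W} {p q : W} (h : G.Adj p q) :
    degr (G.deleteEdges {s(p, q)}) p + 1 = degr G p := by
  have hns : (G.deleteEdges {s(p, q)}).neighborSet p = G.neighborSet p \ {q} := by
    ext w
    simp only [mem_neighborSet, deleteEdges_adj, Set.mem_singleton_iff, Set.mem_diff]
    constructor
    · rintro ⟨hw, hne⟩
      refine ⟨hw, fun hwq => hne ?_⟩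
      rw [Sym2.eq_iff]
      exact Or.inl ⟨rfl, hwq⟩
    · rintro ⟨hw, hne⟩
      refine ⟨hw, fun he => ?_⟩
      rw [Sym2.eq_iff] at he
      rcases he with ⟨-, rfl⟩ | ⟨-, rfl⟩
      · exact hne rfl
      · exact G.irrefl hw
  have hq : q ∈ G.neighborSet p := h
  rw [degr, degr, hns]
  exact Set.ncard_diff_singleton_add_one hq

lemma degr_delete_edge_other {G : SimpleGraph W} {p q z : W} (hz : z ≠ p) (hz' : z ≠ q) :
    degr (G.deleteEdges {s(p, q)}) z = degr G z := by
  have hns : (G.deleteEdges {s(p, q)}).neighborSet z = G.neighborSet z := by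
    ext w
    simp only [mem_neighborSet, deleteEdges_adj, Set.mem_singleton_iff]
    constructor
    · exact fun hw => hw.1
    · intro hw
      refine ⟨hw, fun he => ?_⟩
      rw [Sym2.eq_iff] at he
      rcases he with ⟨rfl, -⟩ | ⟨rfl, -⟩
      · exact hz rfl
      · exact hz' rfl
  rw [degr, degr, hns]

private lemma reach_delete_aux {G : SimpleGraph W} {p q : W} :
    ∀ {w t : W}, G.Walk w t →
      ((G.deleteEdges {s(p, q)}).Reachable t p ∨ (G.deleteEdges {s(p, q)}).Reachable t q) →
      ((G.deleteEdges {s(p, q)}).Reachable w p ∨ (G.deleteEdges {s(p, q)}).Reachable w q) := by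
  intro w t π
  induction π with
  | nil => exact id
  | @cons x y _ hxy π ih =>
    intro ht
    by_cases he : s(x, y) = s(p, q)
    · rw [Sym2.eq_iff] at he
      rcases he with ⟨rfl, rfl⟩ | ⟨rfl, rfl⟩
      · exact Or.inl Reachable.rfl
      · exact Or.inr Reachable.rfl
    · have hadj : (G.deleteEdges {s(p, q)}).Adj x y := by
        simp only [deleteEdges_adj, Set.mem_singleton_iff]
        exact ⟨hxy, he⟩
      rcases ih ht with h1 | h1
      · exact Or.inl (hadj.reachable.trans h1)
      · exact Or.inr (hadj.reachable.trans h1)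

lemma reach_delete_or {G : SimpleGraph W} {p q w : W} (hw : G.Reachable w p) :
    (G.deleteEdges {s(p, q)}).Reachable w p ∨ (G.deleteEdges {s(p, q)}).Reachable w q := by
  obtain ⟨π⟩ := hw
  exact reach_delete_aux π (Or.inl Reachable.rfl)

lemma exists_crossing {G : SimpleGraph W} {S : Set W} :
    ∀ {u b : W}, G.Walk u b → u ∉ S → b ∈ S → ∃ w1 w2, G.Adj w1 w2 ∧ w1 ∉ S ∧ w2 ∈ S := by
  intro u b π
  induction π with
  | nil => exact fun hu hb => absurd hb hu
  | @cons x y _ hxy π ih =>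
    intro hu hb
    by_cases hy : y ∈ S
    · exact ⟨x, y, hxy, hu, hy⟩
    · exact ih hy hb

lemma isAcyclic_mono {G G' : SimpleGraph W} (h : G' ≤ G) (hG : G.IsAcyclic) : G'.IsAcyclic := by
  intro v c hc
  exact hG (c.transfer G (fun e he => (edgeSet_mono h) (c.edges_subset_edgeSet he))) (hc.transfer _)

end Aux

section Exchange

set_option linter.unusedSectionVars false

lemma bip_endpoints (H : Hypergraph' α β) {x y : ↥H.V ⊕ ↥H.E} (h : H.Bip.Adj x y) :
    (∃ (v : ↥H.V) (e : ↥H.E), x = Sum.inl v ∧ y = Sum.inr e) ∨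
    (∃ (v : ↥H.V) (e : ↥H.E), x = Sum.inr e ∧ y = Sum.inl v) := by
  rw [Hypergraph'.Bip, fromRel_adj] at h
  rcases h.2 with ⟨v, e, hx, hy, -⟩ | ⟨v, e, hx, hy, -⟩
  · exact Or.inl ⟨v, e, hx, hy⟩
  · exact Or.inr ⟨v, e, hy, hx⟩

lemma exchange_lemma (H : Hypergraph' α β) :
    ∀ (n : ℕ) (T1 T2 : SimpleGraph (↥H.V ⊕ ↥H.E)),
      (T1.edgeSet \ T2.edgeSet).ncard ≤ n →
      T1 ≤ H.Bip → T2 ≤ H.Bip → T1.IsTree → T2.IsTree →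
      ∀ b : ↥H.E, degr T2 (Sum.inr b) < degr T1 (Sum.inr b) →
      ∃ (y : ↥H.E) (T : SimpleGraph (↥H.V ⊕ ↥H.E)),
        degr T1 (Sum.inr y) < degr T2 (Sum.inr y) ∧ T ≤ H.Bip ∧ T.IsTree ∧
        degr T (Sum.inr b) + 1 = degr T1 (Sum.inr b) ∧
        degr T (Sum.inr y) = degr T1 (Sum.inr y) + 1 ∧
        ∀ z : ↥H.E, z ≠ b → z ≠ y → degr T (Sum.inr z) = degr T1 (Sum.inr z) := by
  intro n
  induction n with
  | zero =>
    intro T1 T2 hcard hle1 hle2 htree1 htree2 b hb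
    exfalso
    have hpivot : ∃ u, T1.Adj (Sum.inr b) u ∧ ¬ T2.Adj (Sum.inr b) u := by
      by_contra hcon
      push_neg at hcon
      have hsub : T1.neighborSet (Sum.inr b) ⊆ T2.neighborSet (Sum.inr b) :=
        fun u hu => hcon u hu
      have hmono := Set.ncard_le_ncard hsub (Set.toFinite _)
      exact absurd hmono (not_le.mpr hb)
    obtain ⟨u, hadj1, hnadj2⟩ := hpivot
    have hmem : s(Sum.inr b, u) ∈ T1.edgeSet \ T2.edgeSet := ⟨hadj1, hnadj2⟩
    have hpos : 0 < (T1.edgeSet \ T2.edgeSet).ncard :=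
      (Set.ncard_pos (Set.toFinite _)).mpr ⟨_, hmem⟩
    omega
  | succ n ih =>
    intro T1 T2 hcard hle1 hle2 htree1 htree2 b hb
    have hpivot : ∃ u, T1.Adj (Sum.inr b) u ∧ ¬ T2.Adj (Sum.inr b) u := by
      by_contra hcon
      push_neg at hcon
      have hsub : T1.neighborSet (Sum.inr b) ⊆ T2.neighborSet (Sum.inr b) :=
        fun u hu => hcon u hu
      have hmono := Set.ncard_le_ncard hsub (Set.toFinite _)
      exact absurd hmono (not_le.mpr hb)
    obtain ⟨u, hadj1, hnadj2⟩ := hpivot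
    obtain ⟨v0, hu⟩ : ∃ v0 : ↥H.V, u = Sum.inl v0 := by
      rcases bip_endpoints H (hle1 hadj1) with ⟨v, e, hx, hy⟩ | ⟨v, e, hx, hy⟩
      · exact absurd hx (by simp)
      · exact ⟨v, hy⟩
    set G1 := T1.deleteEdges {s(Sum.inr b, u)} with hG1def
    set S : Set (↥H.V ⊕ ↥H.E) := {w | G1.Reachable w (Sum.inr b)} with hSdef
    have hbS : Sum.inr b ∈ S := Reachable.rfl
    have huS : u ∉ S := by
      intro hrS
      have hbr : T1.IsBridge s(Sum.inr b, u) :=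
        (isAcyclic_iff_forall_edge_isBridge.mp htree1.IsAcyclic) hadj1
      exact (isBridge_iff.mp hbr) (Reachable.symm hrS)
    obtain ⟨π2⟩ : T2.Reachable u (Sum.inr b) := htree2.isConnected.preconnected u _
    obtain ⟨w1, w2, hadj12, h1S, h2S⟩ := exists_crossing π2 huS hbS
    have hw12 : w1 ≠ w2 := hadj12.ne
    have he'T2 : s(w1, w2) ∈ T2.edgeSet := hadj12
    have hSclosed : ∀ {x y : ↥H.V ⊕ ↥H.E}, G1.Adj x y → y ∈ S → x ∈ S :=
      fun hxy hy => (hxy.reachable.trans hy)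
    have hG1nadj : ¬ G1.Adj w1 w2 := fun h => h1S (hSclosed h h2S)
    have heT2 : s(Sum.inr b, u) ∉ T2.edgeSet := hnadj2
    have he'ne : s(w1, w2) ≠ s(Sum.inr b, u) := fun h => heT2 (h ▸ he'T2)
    have he'T1 : s(w1, w2) ∉ T1.edgeSet := by
      intro hmem
      refine hG1nadj ?_
      simp only [hG1def, deleteEdges_adj, Set.mem_singleton_iff]
      exact ⟨hmem, he'ne⟩
    set T1' := G1 ⊔ fromEdgeSet {s(w1, w2)} with hT1'def
    have hT1'le : T1' ≤ H.Bip := by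
      apply sup_le ((deleteEdges_le _).trans hle1)
      intro x y hxy
      rw [fromEdgeSet_adj] at hxy
      obtain ⟨hmem, hne⟩ := hxy
      rw [Set.mem_singleton_iff, Sym2.eq_iff] at hmem
      rcases hmem with ⟨rfl, rfl⟩ | ⟨rfl, rfl⟩
      · exact hle2 hadj12
      · exact hle2 hadj12.symm
    have reach_or : ∀ w, G1.Reachable w (Sum.inr b) ∨ G1.Reachable w u :=
      fun w => reach_delete_or (htree1.isConnected.preconnected w _)
    have hw1u : G1.Reachable w1 u := by
      rcases reach_or w1 with h | h
      · exact absurd h h1S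
      · exact h
    have hw2b : G1.Reachable w2 (Sum.inr b) := h2S
    have hG1le : G1 ≤ T1' := le_sup_left
    have hadj' : T1'.Adj w1 w2 := by
      rw [hT1'def, sup_adj, fromEdgeSet_adj]
      exact Or.inr ⟨Set.mem_singleton _, hw12⟩
    have hub : T1'.Reachable u (Sum.inr b) :=
      ((hw1u.mono hG1le).symm.trans (hadj'.reachable.trans (hw2b.mono hG1le)))
    have hconn' : T1'.Connected := by
      rw [connected_iff]
      refine ⟨?_, htree1.isConnected.nonempty⟩
      intro x y
      have key : ∀ w, T1'.Reachable w (Sum.inr b) := by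
        intro w
        rcases reach_or w with h | h
        · exact h.mono hG1le
        · exact (h.mono hG1le).trans hub
      exact (key x).trans (key y).symm
    have hG1ac : G1.IsAcyclic := isAcyclic_mono (deleteEdges_le _) htree1.IsAcyclic
    have hnr12 : ¬ G1.Reachable w1 w2 := fun h => h1S (h.trans hw2b)
    have hdel : T1' \ fromEdgeSet {s(w1, w2)} = G1 := by
      ext x y
      simp only [sdiff_adj, hT1'def, sup_adj, fromEdgeSet_adj, Set.mem_singleton_iff]
      constructor
      · rintro ⟨h1 | h2, hne⟩
        · exact h1
        · exact absurd h2 hne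
      · intro h
        refine ⟨Or.inl h, fun hcon => ?_⟩
        obtain ⟨hme, hne⟩ := hcon
        rw [Sym2.eq_iff] at hme
        rcases hme with ⟨rfl, rfl⟩ | ⟨rfl, rfl⟩
        · exact hG1nadj h
        · exact hG1nadj h.symm
    have hbr' : T1'.IsBridge s(w1, w2) := by
      rw [isBridge_iff]
      show ¬ (T1' \ fromEdgeSet {s(w1, w2)}).Reachable w1 w2
      rw [hdel]
      exact hnr12
    have hac' : T1'.IsAcyclic := by
      intro vv c hc
      by_cases hmem : s(w1, w2) ∈ c.edges
      · exact (isBridge_iff_forall_cycle_notMem hadj').mp hbr' c hc hmem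
      · have hsub : ∀ ed ∈ c.edges, ed ∈ G1.edgeSet := by
          intro ed hed
          have h1 : ed ∈ T1'.edgeSet := c.edges_subset_edgeSet hed
          rw [hT1'def, edgeSet_sup, edgeSet_fromEdgeSet] at h1
          rcases h1 with h1 | ⟨h1, -⟩
          · exact h1
          · rw [Set.mem_singleton_iff] at h1
            exact absurd (h1 ▸ hed) hmem
        exact hG1ac (c.transfer G1 hsub) (hc.transfer _)
    have htree' : T1'.IsTree := ⟨hconn', hac'⟩
    have hT1'edge : T1'.edgeSet = (T1.edgeSet \ {s(Sum.inr b, u)}) ∪ {s(w1, w2)} := by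
      rw [hT1'def, edgeSet_sup, hG1def, edgeSet_deleteEdges, edgeSet_fromEdgeSet]
      congr 1
      ext t
      simp only [Set.mem_diff, Set.mem_singleton_iff, Set.mem_setOf_eq]
      constructor
      · exact fun h => h.1
      · intro h
        subst h
        exact ⟨rfl, by simp [Sym2.mk_isDiag_iff, hw12]⟩
    have hmeasure : (T1'.edgeSet \ T2.edgeSet) = (T1.edgeSet \ T2.edgeSet) \ {s(Sum.inr b, u)} := by
      rw [hT1'edge]
      ext t
      simp only [Set.mem_diff, Set.mem_union, Set.mem_singleton_iff]
      constructor
      · rintro ⟨ht1 | rfl, ht2⟩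
        · exact ⟨⟨ht1.1, ht2⟩, ht1.2⟩
        · exact absurd he'T2 ht2
      · rintro ⟨⟨ht1, ht2⟩, hne⟩
        exact ⟨Or.inl ⟨ht1, hne⟩, ht2⟩
    have hcard' : (T1'.edgeSet \ T2.edgeSet).ncard ≤ n := by
      rw [hmeasure]
      have hein : s(Sum.inr b, u) ∈ T1.edgeSet \ T2.edgeSet := ⟨hadj1, heT2⟩
      have hstep := Set.ncard_diff_singleton_add_one hein (Set.toFinite _)
      omega
    -- identify the E-endpoint x of the new edge
    obtain ⟨x, hxor⟩ : ∃ x : ↥H.E,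
        (w2 = Sum.inr x ∧ ∀ z : ↥H.E, w1 ≠ Sum.inr z) ∨
        (w1 = Sum.inr x ∧ ∀ z : ↥H.E, w2 ≠ Sum.inr z) := by
      rcases bip_endpoints H (hle2 hadj12) with ⟨v, e, hx1, hy1⟩ | ⟨v, e, hx1, hy1⟩
      · exact ⟨e, Or.inl ⟨hy1, fun z h => by rw [hx1] at h; exact absurd h (by simp)⟩⟩
      · exact ⟨e, Or.inr ⟨hx1, fun z h => by rw [hy1] at h; exact absurd h (by simp)⟩⟩
    have hdeg'x : degr T1' (Sum.inr x) = degr G1 (Sum.inr x) + 1 := by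
      rcases hxor with ⟨h2, h1⟩ | ⟨h1, h2⟩
      · have hswap : (fromEdgeSet {s(w1, w2)} : SimpleGraph (↥H.V ⊕ ↥H.E)) =
            fromEdgeSet {s(w2, w1)} := by rw [Sym2.eq_swap]
        rw [hT1'def, hswap, ← h2]
        exact degr_sup_edge_fst hw12.symm (fun h => hG1nadj h.symm)
      · rw [hT1'def, ← h1]
        exact degr_sup_edge_fst hw12 hG1nadj
    have hdeg'other : ∀ z : ↥H.E, z ≠ x → degr T1' (Sum.inr z) = degr G1 (Sum.inr z) := by
      intro z hz
      rcases hxor with ⟨h2, h1⟩ | ⟨h1, h2⟩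
      · refine degr_sup_edge_other (fun h => h1 z h.symm) (fun h => hz ?_)
        exact Sum.inr_injective (h.trans h2)
      · refine degr_sup_edge_other (fun h => hz ?_) (fun h => h2 z h.symm)
        exact Sum.inr_injective (h.trans h1)
    have hdegG1b : degr G1 (Sum.inr b) + 1 = degr T1 (Sum.inr b) :=
      degr_delete_edge_fst hadj1
    have hdegG1z : ∀ z : ↥H.E, z ≠ b → degr G1 (Sum.inr z) = degr T1 (Sum.inr z) := by
      intro z hz
      refine degr_delete_edge_other (fun h => hz ?_) (fun h => by simp [hu] at h)
      exact Sum.inr_injective h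
    by_cases hxb : x = b
    · -- degrees of T1' all agree with T1; recurse with same pivot
      subst hxb
      have hd1 : ∀ z : ↥H.E, degr T1' (Sum.inr z) = degr T1 (Sum.inr z) := by
        intro z
        by_cases hz : z = x
        · subst hz
          rw [hdeg'x]
          omega
        · rw [hdeg'other z hz, hdegG1z z hz]
      have hb' : degr T2 (Sum.inr x) < degr T1' (Sum.inr x) := by rw [hd1]; exact hb
      obtain ⟨y, T, hylt, hTle, hTtree, hTb, hTy, hTz⟩ :=
        ih T1' T2 hcard' hT1'le hle2 htree' htree2 x hb'
      refine ⟨y, T, by rw [← hd1 y]; exact hylt, hTle, hTtree, ?_, ?_, ?_⟩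
      · rw [← hd1 x]; exact hTb
      · rw [← hd1 y]; exact hTy
      · intro z h1 h2
        rw [← hd1 z]
        exact hTz z h1 h2
    · have hd'b : degr T1' (Sum.inr b) + 1 = degr T1 (Sum.inr b) := by
        rw [hdeg'other b (fun h => hxb h.symm)]
        exact hdegG1b
      have hd'x : degr T1' (Sum.inr x) = degr T1 (Sum.inr x) + 1 := by
        rw [hdeg'x, hdegG1z x hxb]
      have hd'z : ∀ z : ↥H.E, z ≠ b → z ≠ x →
          degr T1' (Sum.inr z) = degr T1 (Sum.inr z) :=
        fun z h1 h2 => (hdeg'other z h2).trans (hdegG1z z h1)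
      by_cases hlt : degr T1 (Sum.inr x) < degr T2 (Sum.inr x)
      · refine ⟨x, T1', hlt, hT1'le, htree', hd'b, hd'x, ?_⟩
        intro z h1 h2
        exact hd'z z h1 h2
      · push_neg at hlt
        have hbx' : degr T2 (Sum.inr x) < degr T1' (Sum.inr x) := by
          rw [hd'x]; omega
        obtain ⟨y, T, hylt, hTle, hTtree, hTb, hTy, hTz⟩ :=
          ih T1' T2 hcard' hT1'le hle2 htree' htree2 x hbx'
        have hyx : y ≠ x := by
          intro h
          rw [h] at hylt
          omega
        have hyb : y ≠ b := by
          intro h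
          rw [h] at hylt
          omega
        have hyT1 : degr T1 (Sum.inr y) < degr T2 (Sum.inr y) := by
          rw [← hd'z y hyb hyx]; exact hylt
        refine ⟨y, T, hyT1, hTle, hTtree, ?_, ?_, ?_⟩
        · have hzb := hTz b (fun h => hxb h.symm) (fun h => hyb h.symm)
          rw [hzb]
          exact hd'b
        · rw [hTy, hd'z y hyb hyx]
        · intro z hzb hzy
          by_cases hzx : z = x
          · subst hzx
            rw [hd'x] at hTb
            omega
          · rw [hTz z hzx hzy, hd'z z hzb hzx]

end Exchange


/-- rhombus lemma: transfers of valence compose. -/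
theorem transfer_trans (H : Hypergraph' α β) (hconn : H.Bip.Connected)
    (a b c : β) (ha : a ∈ H.E) (hb : b ∈ H.E) (hc : c ∈ H.E)
    (hab : a ≠ b) (hbc : b ≠ c) (hac : a ≠ c)
    (f : β → ℕ) (hf : H.IsHypertree f)
    (h₁ : H.TransferPossible f a b) (h₂ : H.TransferPossible f b c) :
    H.TransferPossible f a c := by
  obtain ⟨hfa, Tab, hTab⟩ := h₁
  obtain ⟨hfb, Tbc, hTbc⟩ := h₂
  refine ⟨hfa, ?_⟩
  have hdeg_ab : ∀ e : ↥H.E, degr Tab (Sum.inr e) = transferFun f a b (e : β) + 1 := hTab.2.2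
  have hdeg_bc : ∀ e : ↥H.E, degr Tbc (Sum.inr e) = transferFun f b c (e : β) + 1 := hTbc.2.2
  set pivA : ↥H.E := ⟨a, ha⟩ with hpivA
  have hcA : (pivA : β) = a := rfl
  have htf1 : transferFun f a b a = f a - 1 := by simp [transferFun]
  have htf2 : transferFun f b c a = f a := by simp [transferFun, hab, hac]
  have hpiv : degr Tab (Sum.inr pivA) < degr Tbc (Sum.inr pivA) := by
    rw [hdeg_ab, hdeg_bc, hcA, htf1, htf2]
    omega
  obtain ⟨y, T, hylt, hTle, hTtree, hTb, hTy, hTz⟩ :=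
    exchange_lemma H ((Tbc.edgeSet \ Tab.edgeSet).ncard) Tbc Tab le_rfl
      hTbc.1.1 hTab.1.1 hTbc.1.2 hTab.1.2 pivA hpiv
  have hyb : (y : β) = b := by
    have h1 := hylt
    rw [hdeg_bc, hdeg_ab] at h1
    by_cases hya : (y : β) = a
    · rw [hya, htf1, htf2] at h1
      omega
    · by_cases hyB : (y : β) = b
      · exact hyB
      · exfalso
        by_cases hyc : (y : β) = c
        · rw [hyc] at h1
          have e1 : transferFun f b c c = f c + 1 := by simp [transferFun, Ne.symm hbc]
          have e2 : transferFun f a b c = f c := by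
            simp [transferFun, Ne.symm hac, Ne.symm hbc]
          rw [e1, e2] at h1
          omega
        · have e1 : transferFun f b c (y : β) = f y := by simp [transferFun, hyB, hyc]
          have e2 : transferFun f a b (y : β) = f y := by simp [transferFun, hya, hyB]
          rw [e1, e2] at h1
          omega
  refine ⟨T, ⟨hTle, hTtree⟩, ?_, ?_⟩
  · intro e he
    have hea : e ≠ a := fun h => he (h ▸ ha)
    have hec : e ≠ c := fun h => he (h ▸ hc)
    obtain ⟨T0, hT0⟩ := hf
    have hfe : f e = 0 := hT0.2.1 e he
    simp [transferFun, hea, hec, hfe]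
  · intro z
    by_cases hza : (z : β) = a
    · have hzp : z = pivA := Subtype.ext hza
      rw [hzp]
      have h2 : degr Tbc (Sum.inr pivA) = f a + 1 := by rw [hdeg_bc, hcA, htf2]
      have h3 : transferFun f a c ((pivA : ↥H.E) : β) = f a - 1 := by
        rw [hcA]; simp [transferFun]
      rw [h3]
      omega
    · by_cases hzb : (z : β) = b
      · have hzy : z = y := Subtype.ext (hzb.trans hyb.symm)
        rw [hzy]
        have e1 : transferFun f b c ((y : ↥H.E) : β) = f b - 1 := by
          rw [hyb]; simp [transferFun]
        have h2 : degr Tbc (Sum.inr y) = f b - 1 + 1 := by rw [hdeg_bc, e1]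
        have h3 : transferFun f a c ((y : ↥H.E) : β) = f b := by
          rw [hyb]; simp [transferFun, Ne.symm hab, hbc]
        rw [h3, hTy, h2]
        omega
      · have hz1 : z ≠ pivA := by
          intro h
          apply hza
          rw [h]
        have hz2 : z ≠ y := by
          intro h
          apply hzb
          rw [h, hyb]
        have h4 := hTz z hz1 hz2
        rw [h4, hdeg_bc]
        by_cases hzc : (z : β) = c
        · rw [hzc]
          have e1 : transferFun f b c c = f c + 1 := by simp [transferFun, Ne.symm hbc]
          have e2 : transferFun f a c c = f c + 1 := by simp [transferFun, Ne.symm hac]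
          rw [e1, e2]
        · have e1 : transferFun f b c (z : β) = f z := by simp [transferFun, hzb, hzc]
          have e2 : transferFun f a c (z : β) = f z := by simp [transferFun, hza, hzc]
          rw [e1, e2]
end
end

section
/- Let e_1 ≠ e_2 be hyperedges in the hypergraph H = (V, E) (with Bip H connected), let E_0 = E ∖ {e_1, e_2}, fix a function f_0 : E_0 → ℕ, and let f_1 and f_2 be hypertrees of H extending f_0 with f_1(e_1) > f_2(e_1). Let x ∈ E_0. Then: (1) if f_1 is such that a transfer of valence is possible from e_1 to x, then f_2 is such that a transfer of valence is possible from e_2 to x; (2) if f_1 is such that a transfer of valence is possible from x to e_2, then f_2 is such that a transfer of valence is possible from x to e_1. -/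
open SimpleGraph Finset
open scoped Classical

noncomputable section

variable {α β : Type} [DecidableEq α] [DecidableEq β]

noncomputable section StapleAux
set_option linter.unusedSectionVars false
set_option maxHeartbeats 1000000
variable {W : Type} [DecidableEq W] [Fintype W]

lemma cross_lemma {G D : SimpleGraph W} {u s t : W} (p : G.Walk s t) :
    D.Reachable u s → ¬ D.Reachable u t →
    ∃ c d, G.Adj c d ∧ D.Reachable u c ∧ ¬ D.Reachable u d := by
  induction p with
  | nil => exact fun hs ht => absurd hs ht
  | @cons a b c h q ih =>
    intro hs ht
    by_cases hb : D.Reachable u b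
    · exact ih hb ht
    · exact ⟨a, b, h, hs, hb⟩

lemma reach_sup {G : SimpleGraph W} {c d s t : W} (h : (G ⊔ edge c d).Reachable s t) :
    G.Reachable s t ∨ (G.Reachable s c ∧ G.Reachable d t) ∨
      (G.Reachable s d ∧ G.Reachable c t) := by
  obtain ⟨p⟩ := h
  induction p with
  | nil => exact Or.inl (Reachable.refl _)
  | @cons a b c' h q ih =>
    rcases (sup_adj _ _ _ _).mp h with hG | hE
    · rcases ih with h1 | ⟨h1, h2⟩ | ⟨h1, h2⟩
      · exact Or.inl (hG.reachable.trans h1)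
      · exact Or.inr (Or.inl ⟨hG.reachable.trans h1, h2⟩)
      · exact Or.inr (Or.inr ⟨hG.reachable.trans h1, h2⟩)
    · rcases (edge_adj _ _ _ _).mp hE with ⟨⟨rfl, rfl⟩ | ⟨rfl, rfl⟩, hne⟩
      · rcases ih with h1 | ⟨h1, h2⟩ | ⟨h1, h2⟩
        · exact Or.inr (Or.inl ⟨Reachable.refl _, h1⟩)
        · exact Or.inr (Or.inl ⟨Reachable.refl _, h2⟩)
        · exact Or.inl h2
      · rcases ih with h1 | ⟨h1, h2⟩ | ⟨h1, h2⟩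
        · exact Or.inr (Or.inr ⟨Reachable.refl _, h1⟩)
        · exact Or.inl h2
        · exact Or.inr (Or.inr ⟨Reachable.refl _, h2⟩)


lemma le_del_sup_edge {T : SimpleGraph W} {u v : W} :
    T ≤ T.deleteEdges {s(u,v)} ⊔ edge u v := by
  intro a b hab
  by_cases he : s(a, b) = s(u, v)
  · right
    rw [Sym2.eq_iff] at he
    rw [edge_adj]
    rcases he with ⟨rfl, rfl⟩ | ⟨rfl, rfl⟩
    · exact ⟨Or.inl ⟨rfl, rfl⟩, hab.ne⟩
    · exact ⟨Or.inr ⟨rfl, rfl⟩, hab.ne⟩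
  · exact Or.inl (SimpleGraph.deleteEdges_adj.mpr ⟨hab, by simpa using he⟩)

lemma tree_split {T : SimpleGraph W} {u v w : W} (p : T.Walk w u) :
    (T.deleteEdges {s(u,v)}).Reachable w u ∨ (T.deleteEdges {s(u,v)}).Reachable w v := by
  have h : (T.deleteEdges {s(u,v)} ⊔ edge u v).Reachable w u :=
    (Reachable.mono le_del_sup_edge ⟨p⟩)
  rcases reach_sup h with h1 | ⟨h1, h2⟩ | ⟨h1, h2⟩
  · exact Or.inl h1
  · exact Or.inl h1
  · exact Or.inr h1



set_option linter.unusedSectionVars false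


lemma tree_exchange {T T' : SimpleGraph W} (hT : T.IsTree) (hT' : T'.IsTree)
    {u v : W} (huv : T.Adj u v) (huv' : ¬ T'.Adj u v) :
    ∃ c d : W, T'.Adj c d ∧ ¬ T.Adj c d ∧
      ((T.deleteEdges {s(u,v)}) ⊔ edge c d).IsTree := by
  set D := T.deleteEdges {s(u,v)} with hDdef
  have hDle : D ≤ T := deleteEdges_le _
  have hbr : T.IsBridge s(u,v) := isAcyclic_iff_forall_adj_isBridge.mp hT.IsAcyclic huv
  have hnr : ¬ D.Reachable u v := (isBridge_iff.mp hbr)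
  have split : ∀ w, D.Reachable w u ∨ D.Reachable w v := by
    intro w
    obtain ⟨p⟩ := hT.isConnected.preconnected w u
    exact tree_split p
  obtain ⟨p'⟩ := hT'.isConnected.preconnected u v
  obtain ⟨c, d, hcd, hc, hd⟩ := cross_lemma p' (Reachable.refl _) hnr
  have hyne : s(c,d) ≠ s(u,v) := by
    intro h
    rw [Sym2.eq_iff] at h
    rcases h with ⟨rfl, rfl⟩ | ⟨rfl, rfl⟩
    · exact huv' hcd
    · exact huv' hcd.symm
  have hyT : ¬ T.Adj c d := by
    intro h
    have : D.Adj c d := SimpleGraph.deleteEdges_adj.mpr ⟨h, by simpa using hyne⟩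
    exact hd (hc.trans this.reachable)
  refine ⟨c, d, hcd, hyT, ?_, ?_⟩
  · -- connected
    have hvd : D.Reachable d v := by
      rcases split d with h | h
      · exact absurd h.symm hd
      · exact h
    have hle : D ≤ D ⊔ edge c d := le_sup_left
    have hadjcd : (D ⊔ edge c d).Adj c d := by
      refine (sup_adj _ _ _ _).mpr (Or.inr ?_)
      exact (edge_adj _ _ _ _).mpr ⟨Or.inl ⟨rfl, rfl⟩, hcd.ne⟩
    have hvu : (D ⊔ edge c d).Reachable v u :=
      (((hvd.mono hle).symm.trans hadjcd.reachable.symm).trans (hc.mono hle).symm)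
    have key : ∀ w, (D ⊔ edge c d).Reachable w u := by
      intro w
      rcases split w with h | h
      · exact h.mono hle
      · exact (h.mono hle).trans hvu
    have : Nonempty W := ⟨u⟩
    exact ⟨fun a b => (key a).trans (key b).symm⟩
  · -- acyclic
    rw [isAcyclic_iff_forall_adj_isBridge]
    intro a b hab
    rcases (sup_adj _ _ _ _).mp hab with hDab | hEab
    · -- an old edge of D
      have hTab : T.Adj a b := hDle hDab
      have habne : s(a,b) ≠ s(c,d) := by
        intro h
        rw [Sym2.eq_iff] at h
        rcases h with ⟨rfl, rfl⟩ | ⟨rfl, rfl⟩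
        · exact hyT hTab
        · exact hyT hTab.symm
      have hbrT : ¬ (T \ fromEdgeSet {s(a,b)}).Reachable a b :=
        (isBridge_iff.mp (isAcyclic_iff_forall_adj_isBridge.mp hT.IsAcyclic hTab))
      rw [isBridge_iff]
      intro hreach
      set D₂ := D.deleteEdges {s(a,b)} with hD2def
      have hKle : (D ⊔ edge c d) \ fromEdgeSet {s(a,b)} ≤ D₂ ⊔ edge c d := by
        intro p q hpq
        rcases hpq with ⟨hpq1, hpq2⟩
        rcases (sup_adj _ _ _ _).mp hpq1 with h1 | h1
        · left
          exact SimpleGraph.deleteEdges_adj.mpr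
            ⟨h1, fun hmem => hpq2 ((fromEdgeSet_adj _).mpr ⟨hmem, h1.ne⟩)⟩
        · exact Or.inr h1
      have hD2le : D₂ ≤ D := deleteEdges_le _
      rcases reach_sup (hreach.mono hKle) with h1 | ⟨h1, h2⟩ | ⟨h1, h2⟩
      · exact hbrT (h1.mono (SimpleGraph.deleteEdges_mono hDle))
      · exact hd (((hc.trans (h1.mono hD2le).symm).trans hDab.reachable).trans (h2.mono hD2le).symm)
      · exact hd (((hc.trans (h2.mono hD2le)).trans hDab.reachable.symm).trans (h1.mono hD2le))
    · -- the new edge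
      rcases (edge_adj _ _ _ _).mp hEab with ⟨hcd1 | hcd1, hne⟩
      all_goals rcases hcd1 with ⟨rfl, rfl⟩
      · rw [isBridge_iff]
        intro hreach
        have hle2 : (D ⊔ edge a b) \ fromEdgeSet {s(a,b)} ≤ D := by
          intro p q hpq
          rcases hpq with ⟨hpq1, hpq2⟩
          rcases (sup_adj _ _ _ _).mp hpq1 with h1 | h1
          · exact h1
          · exact absurd h1 hpq2
        exact hd (hc.trans (hreach.mono hle2))
      · rw [isBridge_iff]
        intro hreach
        have heq : edge b a = edge a b := by rw [edge, edge, Sym2.eq_swap]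
        have hle2 : (D ⊔ edge b a) \ fromEdgeSet {s(a,b)} ≤ D := by
          rw [heq]
          intro p q hpq
          rcases hpq with ⟨hpq1, hpq2⟩
          rcases (sup_adj _ _ _ _).mp hpq1 with h1 | h1
          · exact h1
          · exact absurd h1 hpq2
        exact hd (hc.trans (hreach.mono hle2).symm)

lemma degr_eq_degree (G : SimpleGraph W) (w : W) : degr G w = G.degree w := by
  rw [degr, ← card_neighborFinset_eq_degree, neighborFinset_def, Set.ncard_eq_toFinset_card']

lemma degr_eq_filter (G : SimpleGraph W) (w : W) :
    degr G w = (G.edgeFinset.filter (fun e => w ∈ e)).card := by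
  rw [degr_eq_degree, ← card_incidenceFinset_eq_degree, incidenceFinset_eq_filter]

lemma degr_swap {A B : SimpleGraph W} {x y : Sym2 W}
    (hx0 : x ∈ A.edgeSet) (hy0 : y ∉ A.edgeSet)
    (hB0 : B.edgeSet = (A.edgeSet \ {x}) ∪ {y}) (w : W) :
    degr B w = degr A w - (if w ∈ x then 1 else 0) + (if w ∈ y then 1 else 0) := by
  have hx : x ∈ A.edgeFinset := by rwa [mem_edgeFinset]
  have hy : y ∉ A.edgeFinset := by rwa [mem_edgeFinset]
  have hB : B.edgeFinset = (A.edgeFinset.erase x) ∪ {y} := by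
    ext e
    rw [mem_edgeFinset, hB0]
    simp only [Set.mem_union, Set.mem_diff, Set.mem_singleton_iff, Finset.mem_union,
      Finset.mem_erase, Finset.mem_singleton, mem_edgeFinset]
    tauto
  rw [degr_eq_filter, degr_eq_filter, hB, Finset.filter_union]
  have hxy : x ≠ y := fun h => hy (h ▸ hx)
  rw [Finset.card_union_of_disjoint]
  · rw [Finset.filter_erase, Finset.filter_singleton]
    by_cases hwx : w ∈ x <;> by_cases hwy : w ∈ y <;>
      simp only [hwx, hwy, if_true, if_false, Finset.card_singleton, Finset.card_empty]
    · rw [Finset.card_erase_of_mem (Finset.mem_filter.mpr ⟨hx, hwx⟩)]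
    · rw [Finset.card_erase_of_mem (Finset.mem_filter.mpr ⟨hx, hwx⟩)]
    · rw [Finset.erase_eq_of_notMem (fun h : x ∈ Finset.filter (fun e => w ∈ e) A.edgeFinset => hwx (Finset.mem_filter.mp h).2)]
      omega
    · rw [Finset.erase_eq_of_notMem (fun h : x ∈ Finset.filter (fun e => w ∈ e) A.edgeFinset => hwx (Finset.mem_filter.mp h).2)]
      omega
  · intro s hs1 hs2 e he
    have h1 := hs1 he
    have h2 := hs2 he
    rw [Finset.mem_filter] at h1 h2
    have := Finset.mem_singleton.mp h2.1
    exact absurd (Finset.mem_of_mem_erase (this ▸ h1.1)) (by simpa [this] using hy)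



end StapleAux

section Exch
open SimpleGraph
set_option linter.unusedSectionVars false
set_option maxHeartbeats 2000000

lemma bip_adj_class (H : Hypergraph' α β) {T : SimpleGraph (↥H.V ⊕ ↥H.E)} (hle : T ≤ H.Bip)
    {p q : ↥H.V ⊕ ↥H.E} (h : T.Adj p q) :
    (∃ (v : ↥H.V) (e : ↥H.E), p = Sum.inl v ∧ q = Sum.inr e) ∨
    (∃ (v : ↥H.V) (e : ↥H.E), p = Sum.inr e ∧ q = Sum.inl v) := by
  have h2 := hle h
  rw [Hypergraph'.Bip, fromRel_adj] at h2
  rcases h2.2 with ⟨v, e, h3, h4, _⟩ | ⟨v, e, h3, h4, _⟩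
  · exact Or.inl ⟨v, e, h3, h4⟩
  · exact Or.inr ⟨v, e, h4, h3⟩

lemma exch (H : Hypergraph' α β) : ∀ (n : ℕ) (T T' : SimpleGraph (↥H.V ⊕ ↥H.E)),
    (T.edgeSet \ T'.edgeSet).ncard ≤ n →
    H.IsSpanningTree T → H.IsSpanningTree T' →
    ∀ a : ↥H.E, degr T' (Sum.inr a) < degr T (Sum.inr a) →
    ∃ (b : ↥H.E) (T'' : SimpleGraph (↥H.V ⊕ ↥H.E)), b ≠ a ∧
      degr T (Sum.inr b) < degr T' (Sum.inr b) ∧ H.IsSpanningTree T'' ∧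
      (∀ e : ↥H.E, e ≠ a → e ≠ b → degr T'' (Sum.inr e) = degr T (Sum.inr e)) ∧
      degr T'' (Sum.inr a) = degr T (Sum.inr a) - 1 ∧
      degr T'' (Sum.inr b) = degr T (Sum.inr b) + 1 := by
  intro n
  induction n with
  | zero =>
    intro T T' hcard hT hT' a ha
    exfalso
    obtain ⟨z, hz1, hz2⟩ : ∃ z, T.Adj (Sum.inr a) z ∧ ¬ T'.Adj (Sum.inr a) z := by
      by_contra hcon
      push_neg at hcon
      have hsub : T.neighborSet (Sum.inr a) ⊆ T'.neighborSet (Sum.inr a) :=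
        fun z hz => hcon z hz
      exact absurd (Set.ncard_le_ncard hsub (Set.toFinite _)) (not_le.mpr ha)
    have hmem : s(Sum.inr a, z) ∈ T.edgeSet \ T'.edgeSet := ⟨hz1, hz2⟩
    rw [Nat.le_zero, Set.ncard_eq_zero (Set.toFinite _)] at hcard
    rw [hcard] at hmem
    exact hmem
  | succ n ih =>
    intro T T' hcard hT hT' a ha
    obtain ⟨z, hz1, hz2⟩ : ∃ z, T.Adj (Sum.inr a) z ∧ ¬ T'.Adj (Sum.inr a) z := by
      by_contra hcon
      push_neg at hcon
      have hsub : T.neighborSet (Sum.inr a) ⊆ T'.neighborSet (Sum.inr a) :=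
        fun z hz => hcon z hz
      exact absurd (Set.ncard_le_ncard hsub (Set.toFinite _)) (not_le.mpr ha)
    obtain ⟨v1, hv1⟩ : ∃ v1 : ↥H.V, z = Sum.inl v1 := by
      rcases bip_adj_class H hT.1 hz1 with ⟨v, e, h1, h2⟩ | ⟨v, e, h1, h2⟩
      · exact absurd h1 (by simp)
      · exact ⟨v, h2⟩
    obtain ⟨c, d, hcd, hncd, htree⟩ := tree_exchange hT.2 hT'.2 hz1 hz2
    set x : Sym2 (↥H.V ⊕ ↥H.E) := s(Sum.inr a, z) with hxdef
    set T'' := (T.deleteEdges {x}) ⊔ SimpleGraph.edge c d with hT''def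
    obtain ⟨v0, b, hyeq⟩ : ∃ (v0 : ↥H.V) (b : ↥H.E), s(c, d) = s(Sum.inl v0, Sum.inr b) := by
      rcases bip_adj_class H hT'.1 hcd with ⟨v, e, h1, h2⟩ | ⟨v, e, h1, h2⟩
      · exact ⟨v, e, by rw [h1, h2]⟩
      · exact ⟨v, e, by rw [h1, h2, Sym2.eq_swap]⟩
    have hxT : x ∈ T.edgeSet := hz1
    have hxT' : x ∉ T'.edgeSet := hz2
    have hyT : s(c,d) ∉ T.edgeSet := hncd
    have hyT' : s(c,d) ∈ T'.edgeSet := hcd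
    have hB : T''.edgeSet = (T.edgeSet \ {x}) ∪ {s(c,d)} := by
      rw [hT''def, edgeSet_sup, edgeSet_deleteEdges, edge_edgeSet_of_ne hcd.ne]
    have hT''le : T'' ≤ H.Bip := by
      intro p q h
      rcases (sup_adj _ _ _ _).mp h with h1 | h1
      · exact hT.1 (SimpleGraph.deleteEdges_le _ h1)
      · rcases (edge_adj _ _ _ _).mp h1 with ⟨⟨rfl, rfl⟩ | ⟨rfl, rfl⟩, _⟩
        · exact hT'.1 hcd
        · exact hT'.1 hcd.symm
    have hsp'' : H.IsSpanningTree T'' := ⟨hT''le, htree⟩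
    have hdeg := degr_swap hxT hyT hB
    have hmemx : ∀ e : ↥H.E, ((Sum.inr e : ↥H.V ⊕ ↥H.E) ∈ x) ↔ e = a := by
      intro e; rw [hxdef, hv1]; simp [Sym2.mem_iff]
    have hmemy : ∀ e : ↥H.E, ((Sum.inr e : ↥H.V ⊕ ↥H.E) ∈ s(c,d)) ↔ e = b := by
      intro e; rw [hyeq]; simp [Sym2.mem_iff]
    have hdege : ∀ e : ↥H.E, degr T'' (Sum.inr e)
        = degr T (Sum.inr e) - (if e = a then 1 else 0) + (if e = b then 1 else 0) := by
      intro e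
      rw [hdeg (Sum.inr e)]
      simp only [hmemx e, hmemy e]
    have hTapos : 1 ≤ degr T (Sum.inr a) := Nat.lt_of_le_of_lt (Nat.zero_le _) ha
    have hmeas : (T''.edgeSet \ T'.edgeSet).ncard ≤ n := by
      have h1 : T''.edgeSet \ T'.edgeSet = (T.edgeSet \ T'.edgeSet) \ {x} := by
        ext e
        simp only [hB, Set.mem_diff, Set.mem_union, Set.mem_singleton_iff]
        constructor
        · rintro ⟨h2 | h2, h3⟩
          · exact ⟨⟨h2.1, h3⟩, h2.2⟩
          · exact absurd (h2 ▸ hyT') h3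
        · rintro ⟨⟨h3, h4⟩, h2⟩
          exact ⟨Or.inl ⟨h3, h2⟩, h4⟩
      have hxmem : x ∈ T.edgeSet \ T'.edgeSet := ⟨hxT, hxT'⟩
      rw [h1, Set.ncard_diff_singleton_of_mem hxmem]
      omega
    by_cases hba : b = a
    · have hsame : ∀ e : ↥H.E, degr T'' (Sum.inr e) = degr T (Sum.inr e) := by
        intro e
        rw [hdege e, hba]
        by_cases hea : e = a
        · simp only [hea, if_true]; omega
        · simp only [hea, if_false]; omega
      obtain ⟨b₂, T₃, h1, h2, h3, h4, h5, h6⟩ :=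
        ih T'' T' hmeas hsp'' hT' a (by rw [hsame a]; exact ha)
      refine ⟨b₂, T₃, h1, by rwa [← hsame b₂], h3, ?_, ?_, ?_⟩
      · intro e he1 he2; rw [h4 e he1 he2, hsame e]
      · rw [h5, hsame a]
      · rw [h6, hsame b₂]
    · have hab : a ≠ b := fun h => hba h.symm
      have hdega : degr T'' (Sum.inr a) = degr T (Sum.inr a) - 1 := by
        rw [hdege a]; simp [hab]
      have hdegb : degr T'' (Sum.inr b) = degr T (Sum.inr b) + 1 := by
        rw [hdege b]; simp [hba]
      have hdego : ∀ e : ↥H.E, e ≠ a → e ≠ b → degr T'' (Sum.inr e) = degr T (Sum.inr e) := by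
        intro e he1 he2; rw [hdege e]; simp [he1, he2]
      by_cases hbig : degr T (Sum.inr b) < degr T' (Sum.inr b)
      · exact ⟨b, T'', hba, hbig, hsp'', hdego, hdega, hdegb⟩
      · push_neg at hbig
        obtain ⟨b₂, T₃, h1, h2, h3, h4, h5, h6⟩ :=
          ih T'' T' hmeas hsp'' hT' b (by rw [hdegb]; omega)
        have hb₂a : b₂ ≠ a := by
          intro hq
          rw [hq, hdega] at h2
          omega
        refine ⟨b₂, T₃, hb₂a, ?_, h3, ?_, ?_, ?_⟩
        · rw [← hdego b₂ hb₂a h1]; exact h2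
        · intro e he1 he2
          by_cases heb : e = b
          · subst heb; rw [h5, hdegb]; omega
          · rw [h4 e heb he2, hdego e he1 heb]
        · rw [h4 a hab (Ne.symm hb₂a), hdega]
        · rw [h6, hdego b₂ hb₂a h1]

end Exch


section HT
set_option maxHeartbeats 1000000
lemma exchange_ht (H : Hypergraph' α β) {p q : β → ℕ} (hp : H.IsHypertree p)
    (hq : H.IsHypertree q) {a : β} (h : q a < p a) :
    ∃ b, p b < q b ∧ H.IsHypertree (transferFun p a b) := by
  obtain ⟨T, hTsp, hT0, hTdeg⟩ := hp
  obtain ⟨T', hT'sp, hT'0, hT'deg⟩ := hq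
  have haE : a ∈ H.E := by
    by_contra hc
    rw [hT0 a hc, hT'0 a hc] at h
    omega
  have hdeg : degr T' (Sum.inr ⟨a, haE⟩) < degr T (Sum.inr ⟨a, haE⟩) := by
    rw [hTdeg ⟨a, haE⟩, hT'deg ⟨a, haE⟩]
    exact Nat.add_lt_add_right h 1
  obtain ⟨b', T'', hb1, hb2, hb3, hb4, hb5, hb6⟩ :=
    exch H _ T T' le_rfl hTsp hT'sp ⟨a, haE⟩ hdeg
  have hba : (b' : β) ≠ a := fun hh => hb1 (Subtype.ext hh)
  refine ⟨(b' : β), ?_, T'', hb3, ?_, ?_⟩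
  · rw [hTdeg b', hT'deg b'] at hb2
    omega
  · intro e he
    have hea : e ≠ a := fun hh => he (hh ▸ haE)
    have heb : e ≠ (b' : β) := fun hh => he (hh ▸ b'.2)
    simp only [transferFun, if_neg hea, if_neg heb]
    exact hT0 e he
  · intro e
    by_cases hea : (e : β) = a
    · have he' : e = ⟨a, haE⟩ := Subtype.ext hea
      rw [he', hb5, hTdeg ⟨a, haE⟩]
      show p a + 1 - 1 = transferFun p a (b' : β) a + 1
      simp [transferFun]
      omega
    · by_cases heb : e = b'
      · rw [heb, hb6, hTdeg b']
        show p (b' : β) + 1 + 1 = transferFun p a (b' : β) (b' : β) + 1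
        simp [transferFun, hba]
      · have heb' : (e : β) ≠ (b' : β) := fun hh => heb (Subtype.ext hh)
        rw [hb4 e (fun hh => hea (by rw [hh])) heb, hTdeg e]
        simp only [transferFun, if_neg hea, if_neg heb']

end HT

section Core
set_option maxHeartbeats 1000000
variable {α β : Type} [DecidableEq α] [DecidableEq β]

lemma ht_no_gap (H : Hypergraph' α β) (c : β) :
    ∀ (p q : β → ℕ), H.IsHypertree p → H.IsHypertree q →
    (∀ y, y ≠ c → p y = q y) → ¬ q c < p c := by
  intro p q hp hq hag hlt
  obtain ⟨b, hb1, _⟩ := exchange_ht H hp hq hlt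
  by_cases hbc : b = c
  · rw [hbc] at hb1; omega
  · rw [hag b hbc] at hb1; omega

lemma ht_agree_one (H : Hypergraph' α β) {p q : β → ℕ} (hp : H.IsHypertree p)
    (hq : H.IsHypertree q) (c : β) (hagree : ∀ y, y ≠ c → p y = q y) : p c = q c := by
  rcases lt_trichotomy (p c) (q c) with h | h | h
  · exact absurd h (ht_no_gap H c q p hq hp (fun y hy => (hagree y hy).symm))
  · exact h
  · exact absurd h (ht_no_gap H c p q hp hq hagree)

lemma ht_sum_two (H : Hypergraph' α β) {c d : β} (hcd : c ≠ d) :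
    ∀ (k : ℕ) (p q : β → ℕ), H.IsHypertree p → H.IsHypertree q →
    (∀ y, y ≠ c → y ≠ d → p y = q y) → p c = q c + k →
    p c + p d = q c + q d := by
  intro k
  induction k with
  | zero =>
    intro p q hp hq hag hk
    have hd : p d = q d := by
      refine ht_agree_one H hp hq d (fun y hy => ?_)
      by_cases hyc : y = c
      · rw [hyc]; omega
      · exact hag y hyc hy
    omega
  | succ k ih =>
    intro p q hp hq hag hk
    have hlt : q c < p c := by omega
    obtain ⟨b, hb1, hb2⟩ := exchange_ht H hp hq hlt
    have hbd : b = d := by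
      by_contra hbd
      by_cases hbc : b = c
      · rw [hbc] at hb1; omega
      · rw [hag b hbc hbd] at hb1; omega
    rw [hbd] at hb1 hb2
    set p' := transferFun p c d with hp'
    have hp'c : p' c = p c - 1 := by simp [hp', transferFun]
    have hp'd : p' d = p d + 1 := by simp [hp', transferFun, Ne.symm hcd]
    have hp'o : ∀ y, y ≠ c → y ≠ d → p' y = p y := by
      intro y h1 h2; simp [hp', transferFun, h1, h2]
    have := ih p' q hb2 hq
      (fun y h1 h2 => by rw [hp'o y h1 h2]; exact hag y h1 h2)
      (by omega)
    omega

lemma staple_core (H : Hypergraph' α β) {e₁ e₂ x : β} (hne : e₁ ≠ e₂)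
    (hxe₁ : x ≠ e₁) (hxe₂ : x ≠ e₂) :
    ∀ (k : ℕ) (f₁ f₂ : β → ℕ), H.IsHypertree f₁ → H.IsHypertree f₂ →
    (∀ y, y ≠ e₁ → y ≠ e₂ → f₁ y = f₂ y) → f₁ e₁ = f₂ e₁ + (k + 1) →
    (H.TransferPossible f₁ e₁ x → H.TransferPossible f₂ e₂ x) ∧
    (H.TransferPossible f₁ x e₂ → H.TransferPossible f₂ x e₁) := by
  intro k
  induction k with
  | zero =>
    intro f₁ f₂ h1 h2 hagree hk
    have hsum : f₁ e₁ + f₁ e₂ = f₂ e₁ + f₂ e₂ :=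
      ht_sum_two H hne 1 f₁ f₂ h1 h2 hagree hk
    have hfx : f₁ x = f₂ x := hagree x hxe₁ hxe₂
    constructor
    · rintro ⟨hpos, hht⟩
      set g := transferFun f₁ e₁ x with hg
      have hge₁ : g e₁ = f₁ e₁ - 1 := by simp [hg, transferFun]
      have hgx : g x = f₁ x + 1 := by simp [hg, transferFun, hxe₁]
      have hge₂ : g e₂ = f₁ e₂ := by simp [hg, transferFun, Ne.symm hne, Ne.symm hxe₂]
      have hgo : ∀ y, y ≠ e₁ → y ≠ x → g y = f₁ y := by
        intro y hy1 hy2; simp [hg, transferFun, hy1, hy2]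
      have hlt : g e₂ < f₂ e₂ := by omega
      obtain ⟨b, hb1, hb2⟩ := exchange_ht H h2 hht hlt
      have hbx : b = x := by
        by_contra hbx
        by_cases hb₁ : b = e₁
        · rw [hb₁, hge₁] at hb1; omega
        · by_cases hb₂ : b = e₂
          · rw [hb₂, hge₂] at hb1; omega
          · rw [hgo b hb₁ hbx, hagree b hb₁ hb₂] at hb1; omega
      rw [hbx] at hb2
      exact ⟨by omega, hb2⟩
    · rintro ⟨hpos, hht⟩
      have heq : transferFun f₂ x e₁ = transferFun f₁ x e₂ := by
        funext y
        by_cases hy1 : y = x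
        · subst hy1; simp [transferFun]; omega
        · by_cases hy2 : y = e₁
          · subst hy2
            simp [transferFun, Ne.symm hxe₁, hne]
            omega
          · by_cases hy3 : y = e₂
            · subst hy3
              simp [transferFun, Ne.symm hxe₂, Ne.symm hne, hy2]
              omega
            · have := hagree y hy2 hy3
              simp [transferFun, hy1, hy2, hy3]
              omega
      exact ⟨by omega, heq ▸ hht⟩
  | succ k ih =>
    intro f₁ f₂ h1 h2 hagree hk
    have hsum : f₁ e₁ + f₁ e₂ = f₂ e₁ + f₂ e₂ :=
      ht_sum_two H hne (k + 2) f₁ f₂ h1 h2 hagree (by omega)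
    have hfx : f₁ x = f₂ x := hagree x hxe₁ hxe₂
    have hlt : f₁ e₂ < f₂ e₂ := by omega
    obtain ⟨b, hb1, hb2⟩ := exchange_ht H h2 h1 hlt
    have hbe₁ : b = e₁ := by
      by_contra hb
      by_cases hb₂ : b = e₂
      · rw [hb₂] at hb1; omega
      · rw [hagree b hb hb₂] at hb1; omega
    rw [hbe₁] at hb1 hb2
    set f₂' := transferFun f₂ e₂ e₁ with hf₂'
    have h₂'₁ : f₂' e₁ = f₂ e₁ + 1 := by simp [hf₂', transferFun, hne]
    have h₂'₂ : f₂' e₂ = f₂ e₂ - 1 := by simp [hf₂', transferFun]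
    have h₂'o : ∀ y, y ≠ e₂ → y ≠ e₁ → f₂' y = f₂ y := by
      intro y hy1 hy2; simp [hf₂', transferFun, hy1, hy2]
    have h₂'x : f₂' x = f₂ x := h₂'o x hxe₂ hxe₁
    have hagree' : ∀ y, y ≠ e₁ → y ≠ e₂ → f₁ y = f₂' y := by
      intro y hy1 hy2; rw [h₂'o y hy2 hy1]; exact hagree y hy1 hy2
    have hIH := ih f₁ f₂' h1 hb2 hagree' (by omega)
    constructor
    · rintro ⟨hpos, hht⟩
      obtain ⟨hpos', hht'⟩ := hIH.1 ⟨hpos, hht⟩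
      set h := transferFun f₂' e₂ x with hh
      have hhe₂ : h e₂ = f₂ e₂ - 2 := by
        rw [hh]; simp [transferFun]; omega
      have hhx : h x = f₂ x + 1 := by
        rw [hh]; simp [transferFun, hxe₂]; omega
      have hhe₁ : h e₁ = f₂ e₁ + 1 := by
        rw [hh]; simp [transferFun, hne, Ne.symm hxe₁]; omega
      have hho : ∀ y, y ≠ e₁ → y ≠ e₂ → y ≠ x → h y = f₂ y := by
        intro y hy1 hy2 hy3
        rw [hh]; simp [transferFun, hy2, hy3]
        exact h₂'o y hy2 hy1
      have hlt2 : f₂ e₁ < h e₁ := by omega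
      obtain ⟨b2, hb21, hb22⟩ := exchange_ht H hht' h2 hlt2
      have hb2e₂ : b2 = e₂ := by
        by_contra hb2e
        by_cases hq1 : b2 = e₁
        · rw [hq1, hhe₁] at hb21; omega
        · by_cases hq2 : b2 = x
          · rw [hq2, hhx] at hb21; omega
          · rw [hho b2 hq1 hb2e hq2] at hb21; omega
      rw [hb2e₂] at hb22
      have heq : transferFun h e₁ e₂ = transferFun f₂ e₂ x := by
        funext y
        by_cases hy1 : y = e₁
        · subst hy1
          simp [transferFun, hne, Ne.symm hxe₁]
          omega
        · by_cases hy2 : y = e₂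
          · subst hy2
            simp [transferFun, Ne.symm hne, Ne.symm hxe₂]
            omega
          · by_cases hy3 : y = x
            · subst hy3
              simp [transferFun, hxe₁, hxe₂]
              omega
            · have := hho y hy1 hy2 hy3
              simp [transferFun, hy1, hy2, hy3]
              omega
      rw [heq] at hb22
      exact ⟨by omega, hb22⟩
    · rintro ⟨hpos, hht⟩
      obtain ⟨hpos', hht'⟩ := hIH.2 ⟨hpos, hht⟩
      set h := transferFun f₂' x e₁ with hh
      have hhx : h x = f₂ x - 1 := by
        rw [hh]; simp [transferFun]; omega
      have hhe₁ : h e₁ = f₂ e₁ + 2 := by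
        rw [hh]; simp [transferFun, Ne.symm hxe₁]; omega
      have hhe₂ : h e₂ = f₂ e₂ - 1 := by
        rw [hh]; simp [transferFun, Ne.symm hxe₂, Ne.symm hne]; omega
      have hho : ∀ y, y ≠ e₁ → y ≠ e₂ → y ≠ x → h y = f₂ y := by
        intro y hy1 hy2 hy3
        rw [hh]; simp [transferFun, hy3, hy1]
        exact h₂'o y hy2 hy1
      have hf₂x : 0 < f₂ x := by omega
      have hlt2 : h x < f₂ x := by omega
      obtain ⟨b2, hb21, hb22⟩ := exchange_ht H h2 hht' hlt2
      have hb2e₁ : b2 = e₁ := by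
        by_contra hb2e
        by_cases hq1 : b2 = e₂
        · rw [hq1, hhe₂] at hb21; omega
        · by_cases hq2 : b2 = x
          · rw [hq2, hhx] at hb21; omega
          · rw [hho b2 hb2e hq1 hq2] at hb21; omega
      rw [hb2e₁] at hb22
      exact ⟨hf₂x, hb22⟩

end Core


/-- staple lemma. -/
theorem staple (H : Hypergraph' α β) (hconn : H.Bip.Connected)
    (e₁ e₂ : β) (he₁ : e₁ ∈ H.E) (he₂ : e₂ ∈ H.E) (hne : e₁ ≠ e₂)
    (f₁ f₂ : β → ℕ) (h₁ : H.IsHypertree f₁) (h₂ : H.IsHypertree f₂)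
    (hagree : ∀ y, y ≠ e₁ → y ≠ e₂ → f₁ y = f₂ y)
    (hgt : f₂ e₁ < f₁ e₁)
    (x : β) (hx : x ∈ H.E) (hxe₁ : x ≠ e₁) (hxe₂ : x ≠ e₂) :
    (H.TransferPossible f₁ e₁ x → H.TransferPossible f₂ e₂ x) ∧
    (H.TransferPossible f₁ x e₂ → H.TransferPossible f₂ x e₁) := by
  exact staple_core H hne hxe₁ hxe₂ (f₁ e₁ - f₂ e₁ - 1) f₁ f₂ h₁ h₂ hagree (by omega)
end
end

section
/- For a hypergraph H = (V, E) with Bip H connected, the degree of its interior polynomial is at most min{|E|, |V|} − 1 and the degree of its exterior polynomial is at most |E| − 1; equivalently, for any linear order on E and any hypertree f, ῑ(f) ≤ min{|E|, |V|} − 1 and ε̄(f) ≤ |E| − 1. -/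
open SimpleGraph Finset
open scoped Classical

noncomputable section

variable {α β : Type} [DecidableEq α] [DecidableEq β]

lemma degr_eq_degree_s13 {W : Type} [Fintype W] (T : SimpleGraph W) (x : W) :
    degr T x = T.degree x := by
  simp [degr, SimpleGraph.degree, SimpleGraph.neighborFinset,
    Set.ncard_eq_toFinset_card']

lemma bip_adj_cases (H : Hypergraph' α β) {T : SimpleGraph (↥H.V ⊕ ↥H.E)} (hle : T ≤ H.Bip)
    {x y : ↥H.V ⊕ ↥H.E} (h : T.Adj x y) :
    (∃ (v : ↥H.V) (e : ↥H.E), x = Sum.inl v ∧ y = Sum.inr e) ∨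
    (∃ (v : ↥H.V) (e : ↥H.E), x = Sum.inr e ∧ y = Sum.inl v) := by
  have hb := hle h
  simp only [Hypergraph'.Bip, SimpleGraph.fromRel_adj] at hb
  rcases hb.2 with ⟨v, e, hx, hy, _⟩ | ⟨v, e, hy, hx, _⟩
  · exact Or.inl ⟨v, e, hx, hy⟩
  · exact Or.inr ⟨v, e, hx, hy⟩

lemma degree_inr (H : Hypergraph' α β) {T : SimpleGraph (↥H.V ⊕ ↥H.E)} (hle : T ≤ H.Bip)
    (e : ↥H.E) :
    T.degree (Sum.inr e) =
      (Finset.univ.filter fun v : ↥H.V => T.Adj (Sum.inl v) (Sum.inr e)).card := by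
  rw [← SimpleGraph.card_neighborFinset_eq_degree]
  refine (Finset.card_bij (fun v _ => (Sum.inl v : ↥H.V ⊕ ↥H.E)) ?_ ?_ ?_).symm
  · intro v hv
    simp only [Finset.mem_filter] at hv
    simpa [SimpleGraph.mem_neighborFinset] using hv.2.symm
  · intro a ha b hb hab
    simpa using hab
  · intro w hw
    rw [SimpleGraph.mem_neighborFinset] at hw
    rcases bip_adj_cases H hle hw with ⟨v', e', hx, hy⟩ | ⟨v', e', hx, hy⟩
    · exact absurd hx (by simp)
    · exact ⟨v', by simp [hy ▸ hw.symm], hy.symm⟩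

lemma degree_inl (H : Hypergraph' α β) {T : SimpleGraph (↥H.V ⊕ ↥H.E)} (hle : T ≤ H.Bip)
    (v : ↥H.V) :
    T.degree (Sum.inl v) =
      (Finset.univ.filter fun e : ↥H.E => T.Adj (Sum.inl v) (Sum.inr e)).card := by
  rw [← SimpleGraph.card_neighborFinset_eq_degree]
  refine (Finset.card_bij (fun e _ => (Sum.inr e : ↥H.V ⊕ ↥H.E)) ?_ ?_ ?_).symm
  · intro e he
    simp only [Finset.mem_filter] at he
    simpa [SimpleGraph.mem_neighborFinset] using he.2
  · intro a ha b hb hab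
    simpa using hab
  · intro w hw
    rw [SimpleGraph.mem_neighborFinset] at hw
    rcases bip_adj_cases H hle hw with ⟨v', e', hx, hy⟩ | ⟨v', e', hx, hy⟩
    · exact ⟨e', by simp [hy ▸ hw], hy.symm⟩
    · exact absurd hx (by simp)

/-- For any hypertree `f`, `∑_{e ∈ E} f e + 1 = |V|`. -/
lemma sum_hypertree (H : Hypergraph' α β) {f : β → ℕ} (hf : H.IsHypertree f) :
    (∑ e ∈ H.E, f e) + 1 = H.V.card := by
  obtain ⟨T, ⟨hle, htree⟩, hzero, hdeg⟩ := hf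
  -- double counting: both side-sums of degrees equal the number of incidence pairs
  set A : Finset (↥H.V × ↥H.E) :=
    Finset.univ.filter (fun p => T.Adj (Sum.inl p.1) (Sum.inr p.2)) with hA
  have h1 : A.card = ∑ v : ↥H.V, T.degree (Sum.inl v) := by
    rw [Finset.card_eq_sum_card_fiberwise (f := Prod.fst) (t := Finset.univ)
      (fun x _ => Finset.mem_univ _)]
    refine Finset.sum_congr rfl fun v _ => ?_
    rw [degree_inl H hle v]
    refine Finset.card_bij (fun p _ => p.2) ?_ ?_ ?_
    · intro p hp
      simp only [hA, Finset.mem_filter] at hp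
      simp only [Finset.mem_filter, Finset.mem_univ, true_and]
      exact hp.2 ▸ hp.1.2
    · intro p hp q hq hpq
      simp only [hA, Finset.mem_filter] at hp hq
      exact Prod.ext (hp.2.trans hq.2.symm) hpq
    · intro e he
      simp only [Finset.mem_filter] at he
      exact ⟨(v, e), by simp [hA, he.2], rfl⟩
  have h2 : A.card = ∑ e : ↥H.E, T.degree (Sum.inr e) := by
    rw [Finset.card_eq_sum_card_fiberwise (f := Prod.snd) (t := Finset.univ)
      (fun x _ => Finset.mem_univ _)]
    refine Finset.sum_congr rfl fun e _ => ?_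
    rw [degree_inr H hle e]
    refine Finset.card_bij (fun p _ => p.1) ?_ ?_ ?_
    · intro p hp
      simp only [hA, Finset.mem_filter] at hp
      simp only [Finset.mem_filter, Finset.mem_univ, true_and]
      exact hp.2 ▸ hp.1.2
    · intro p hp q hq hpq
      simp only [hA, Finset.mem_filter] at hp hq
      exact Prod.ext hpq (hp.2.trans hq.2.symm)
    · intro v hv
      simp only [Finset.mem_filter] at hv
      exact ⟨(v, e), by simp [hA, hv.2], rfl⟩
  have hs : (∑ v : ↥H.V, T.degree (Sum.inl v)) + (∑ e : ↥H.E, T.degree (Sum.inr e)) =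
      2 * T.edgeFinset.card := by
    have := T.sum_degrees_eq_twice_card_edges
    rwa [Fintype.sum_sum_type] at this
  have htc : T.edgeFinset.card + 1 = Fintype.card (↥H.V ⊕ ↥H.E) := htree.card_edgeFinset
  have hcardW : Fintype.card (↥H.V ⊕ ↥H.E) = H.V.card + H.E.card := by
    simp [Fintype.card_sum]
  have hdegsum : (∑ e : ↥H.E, T.degree (Sum.inr e)) = (∑ e ∈ H.E, f e) + H.E.card := by
    have : ∀ e : ↥H.E, T.degree (Sum.inr e) = f (e : β) + 1 := by
      intro e
      rw [← degr_eq_degree_s13]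
      exact hdeg e
    rw [Finset.sum_congr rfl (fun e _ => this e), Finset.sum_add_distrib]
    simp [Finset.sum_attach H.E f]
  omega

/-- degree bounds: `ῑ(f) ≤ min{|E|,|V|} − 1` and `ε̄(f) ≤ |E| − 1`. -/
theorem inactivity_bounds (H : Hypergraph' α β) (hconn : H.Bip.Connected)
    (o : LinearOrder β) (f : β → ℕ) (hf : H.IsHypertree f) :
    H.intInact o f ≤ min H.E.card H.V.card - 1 ∧
    H.extInact o f ≤ H.E.card - 1 := by
  rcases H.E.eq_empty_or_nonempty with hE | hne
  · simp [Hypergraph'.intInact, Hypergraph'.extInact, hE]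
  · letI := o
    obtain ⟨e₀, he₀, hmin⟩ := H.E.exists_min_image id hne
    -- the minimal hyperedge is both internally and externally active
    have hsubI : H.E.filter (fun e => ¬ H.InternallyActive o f e) ⊆ H.E.erase e₀ := by
      intro e he
      rw [Finset.mem_filter] at he
      rw [Finset.mem_erase]
      refine ⟨?_, he.1⟩
      rintro rfl
      exact he.2 fun x hx hlt _ => absurd hlt (not_lt.2 (hmin x hx))
    have hsubE : H.E.filter (fun e => ¬ H.ExternallyActive o f e) ⊆ H.E.erase e₀ := by
      intro e he
      rw [Finset.mem_filter] at he
      rw [Finset.mem_erase]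
      refine ⟨?_, he.1⟩
      rintro rfl
      exact he.2 fun x hx hlt _ => absurd hlt (not_lt.2 (hmin x hx))
    have hcarderase : (H.E.erase e₀).card = H.E.card - 1 := Finset.card_erase_of_mem he₀
    have hIE : H.intInact o f ≤ H.E.card - 1 := by
      rw [Hypergraph'.intInact, ← hcarderase]
      exact Finset.card_le_card hsubI
    have hEE : H.extInact o f ≤ H.E.card - 1 := by
      rw [Hypergraph'.extInact, ← hcarderase]
      exact Finset.card_le_card hsubE
    -- every internally inactive hyperedge has f e ≥ 1
    have hsum := sum_hypertree H hf
    have hpos : ∀ e ∈ H.E.filter (fun e => ¬ H.InternallyActive o f e), 1 ≤ f e := by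
      intro e he
      rw [Finset.mem_filter] at he
      have := he.2
      rw [Hypergraph'.InternallyActive] at this
      push_neg at this
      obtain ⟨x, hx, hlt, htp⟩ := this
      exact htp.1
    have hIV : H.intInact o f ≤ H.V.card - 1 := by
      have h1 : H.intInact o f ≤ ∑ e ∈ H.E.filter (fun e => ¬ H.InternallyActive o f e), f e := by
        rw [Hypergraph'.intInact, Finset.card_eq_sum_ones]
        exact Finset.sum_le_sum hpos
      have h2 : (∑ e ∈ H.E.filter (fun e => ¬ H.InternallyActive o f e), f e) ≤ ∑ e ∈ H.E, f e :=
        Finset.sum_le_sum_of_subset (Finset.filter_subset _ _)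
      omega
    exact ⟨by omega, hEE⟩
end
end
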